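/- arXiv:1601.03425 — 10 statements merged into one kernel-verified Lean document; each statement's English description precedes it below -/
import Mathlib

section
/- For nonnegative integers p, q, r, s, the (Minkowski) set sum S^{p,q} + S^{r,s} = {T + S : T ∈ S^{p,q}, S ∈ S^{r,s}} equals S^{p+r, q+s}. Equivalently, a Hermitian n×n complex matrix can be written as the sum of a matrix with at most p positive and at most q negative eigenvalues and a matrix with at most r positive and at most s negative eigenvalues if and only if it has at most p+r strictly positive eigenvalues and at most q+s strictly negative eigenvalues. -/
open Matrix Finset Pointwise

/-- `S^{p,q}`: the set of Hermitian `n×n` complex matrices having at most `p` strictly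
positive eigenvalues and at most `q` strictly negative eigenvalues (with multiplicity). -/
noncomputable def Spq (n p q : ℕ) : Set (Matrix (Fin n) (Fin n) ℂ) :=
  {T | ∃ hT : T.IsHermitian,
    (Finset.univ.filter fun i => 0 < hT.eigenvalues i).card ≤ p ∧
    (Finset.univ.filter fun i => hT.eigenvalues i < 0).card ≤ q}

namespace SpqAux

open Module

variable {n : ℕ}

/-- Coefficients of an element of the span of part of an orthonormal basis vanish off that part. -/
lemma repr_eq_zero_of_mem_span (b : OrthonormalBasis (Fin n) ℂ (EuclideanSpace ℂ (Fin n)))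
    (S : Finset (Fin n)) {x : EuclideanSpace ℂ (Fin n)}
    (hx : x ∈ Submodule.span ℂ (b '' ↑S)) {i : Fin n} (hi : i ∉ S) :
    b.repr x i = 0 := by
  induction hx using Submodule.span_induction with
  | mem y hy =>
    obtain ⟨j, hj, rfl⟩ := hy
    rw [b.repr_apply_apply]
    exact b.orthonormal.2 (fun h : i = j => hi (h ▸ hj))
  | zero => simp
  | add x y hx hy ihx ihy => simp [map_add, ihx, ihy]
  | smul a x hx ih => simp [_root_.map_smul, ih]

lemma finrank_span_image (b : OrthonormalBasis (Fin n) ℂ (EuclideanSpace ℂ (Fin n)))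
    (S : Finset (Fin n)) :
    finrank ℂ (Submodule.span ℂ (b '' ↑S)) = S.card := by
  have h1 : b '' ↑S = Set.range (⇑b ∘ (Subtype.val : {i // i ∈ S} → Fin n)) := by
    ext y
    simp [Set.range_comp]
  rw [h1, finrank_span_eq_card
    ((b.orthonormal.comp _ Subtype.val_injective).linearIndependent)]
  simp

lemma inner_toEuclideanLin (b : OrthonormalBasis (Fin n) ℂ (EuclideanSpace ℂ (Fin n)))
    (A : Matrix (Fin n) (Fin n) ℂ) (μ : Fin n → ℝ)
    (hL : ∀ i, Matrix.toEuclideanLin A (b i) = (μ i : ℂ) • b i)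
    (x : EuclideanSpace ℂ (Fin n)) :
    (inner ℂ x (Matrix.toEuclideanLin A x) : ℂ)
      = ((∑ i, μ i * ‖b.repr x i‖ ^ 2 : ℝ) : ℂ) := by
  have hx : Matrix.toEuclideanLin A x = ∑ i, (b.repr x i * (μ i : ℂ)) • b i := by
    conv_lhs => rw [← b.sum_repr x]
    rw [map_sum]
    simp only [_root_.map_smul, hL, smul_smul]
  rw [hx, inner_sum]
  have hterm : ∀ i, (inner ℂ x ((b.repr x i * (μ i : ℂ)) • b i) : ℂ)
      = ((μ i * ‖b.repr x i‖ ^ 2 : ℝ) : ℂ) := by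
    intro i
    rw [inner_smul_right]
    have h1 : (inner ℂ x (b i) : ℂ) = starRingEnd ℂ (b.repr x i) := by
      rw [← inner_conj_symm, ← b.repr_apply_apply]
    rw [h1]
    calc b.repr x i * (μ i : ℂ) * starRingEnd ℂ (b.repr x i)
        = (μ i : ℂ) * (b.repr x i * starRingEnd ℂ (b.repr x i)) := by ring
      _ = ((μ i * ‖b.repr x i‖ ^ 2 : ℝ) : ℂ) := by
          rw [Complex.mul_conj']
          push_cast
          ring
  rw [Finset.sum_congr rfl (fun i _ => hterm i)]
  push_cast
  ring

lemma re_inner_toEuclideanLin (b : OrthonormalBasis (Fin n) ℂ (EuclideanSpace ℂ (Fin n)))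
    (A : Matrix (Fin n) (Fin n) ℂ) (μ : Fin n → ℝ)
    (hL : ∀ i, Matrix.toEuclideanLin A (b i) = (μ i : ℂ) • b i)
    (x : EuclideanSpace ℂ (Fin n)) :
    Complex.re (inner ℂ x (Matrix.toEuclideanLin A x) : ℂ)
      = ∑ i, μ i * ‖b.repr x i‖ ^ 2 := by
  rw [inner_toEuclideanLin b A μ hL x, Complex.ofReal_re]

lemma qf_nonpos_on_span (b : OrthonormalBasis (Fin n) ℂ (EuclideanSpace ℂ (Fin n)))
    {A : Matrix (Fin n) (Fin n) ℂ} {μ : Fin n → ℝ}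
    (hL : ∀ i, Matrix.toEuclideanLin A (b i) = (μ i : ℂ) • b i)
    (S : Finset (Fin n)) (hμ : ∀ i ∈ S, μ i ≤ 0)
    {x : EuclideanSpace ℂ (Fin n)} (hx : x ∈ Submodule.span ℂ (b '' ↑S)) :
    Complex.re (inner ℂ x (Matrix.toEuclideanLin A x) : ℂ) ≤ 0 := by
  rw [re_inner_toEuclideanLin b A μ hL x]
  apply Finset.sum_nonpos
  intro i _
  by_cases hi : i ∈ S
  · exact mul_nonpos_iff.mpr (Or.inr ⟨hμ i hi, sq_nonneg _⟩)
  · simp [repr_eq_zero_of_mem_span b S hx hi]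

lemma qf_nonneg_on_span (b : OrthonormalBasis (Fin n) ℂ (EuclideanSpace ℂ (Fin n)))
    {A : Matrix (Fin n) (Fin n) ℂ} {μ : Fin n → ℝ}
    (hL : ∀ i, Matrix.toEuclideanLin A (b i) = (μ i : ℂ) • b i)
    (S : Finset (Fin n)) (hμ : ∀ i ∈ S, 0 ≤ μ i)
    {x : EuclideanSpace ℂ (Fin n)} (hx : x ∈ Submodule.span ℂ (b '' ↑S)) :
    0 ≤ Complex.re (inner ℂ x (Matrix.toEuclideanLin A x) : ℂ) := by
  rw [re_inner_toEuclideanLin b A μ hL x]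
  apply Finset.sum_nonneg
  intro i _
  by_cases hi : i ∈ S
  · exact mul_nonneg (hμ i hi) (sq_nonneg _)
  · simp [repr_eq_zero_of_mem_span b S hx hi]

lemma toEuclideanLin_eigenvectorBasis {A : Matrix (Fin n) (Fin n) ℂ} (hA : A.IsHermitian)
    (i : Fin n) :
    Matrix.toEuclideanLin A (hA.eigenvectorBasis i)
      = ((hA.eigenvalues i : ℝ) : ℂ) • hA.eigenvectorBasis i := by
  apply (WithLp.equiv 2 (Fin n → ℂ)).injective
  have h := hA.mulVec_eigenvectorBasis i
  rw [WithLp.equiv_apply, Matrix.ofLp_toEuclideanLin_apply]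
  funext j
  have hj := congrFun h j
  simpa [Pi.smul_apply, Complex.real_smul] using hj

/-- Key bound: a subspace of dimension `≥ n - p` on which the quadratic form is nonpositive
forces at most `p` positive eigenvalues. -/
lemma card_pos_le {A : Matrix (Fin n) (Fin n) ℂ} (hA : A.IsHermitian) {p : ℕ}
    (W : Submodule ℂ (EuclideanSpace ℂ (Fin n))) (hW : n - p ≤ finrank ℂ W)
    (hQ : ∀ x ∈ W, Complex.re (inner ℂ x (Matrix.toEuclideanLin A x) : ℂ) ≤ 0) :
    (Finset.univ.filter fun i => 0 < hA.eigenvalues i).card ≤ p := by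
  by_contra hcon
  push_neg at hcon
  set b := hA.eigenvectorBasis with hb
  set P := Finset.univ.filter fun i => 0 < hA.eigenvalues i with hP
  have hPn : P.card ≤ n := le_trans (Finset.card_filter_le _ _) (by simp)
  have hL : ∀ i, Matrix.toEuclideanLin A (b i) = ((hA.eigenvalues i : ℝ) : ℂ) • b i :=
    toEuclideanLin_eigenvectorBasis hA
  set Wp := Submodule.span ℂ (b '' ↑P) with hWp
  have hdim : finrank ℂ Wp = P.card := finrank_span_image b P
  have hsup : finrank ℂ ↑(W ⊔ Wp) ≤ n :=
    le_trans (Submodule.finrank_le _) (by simp)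
  have heq := Submodule.finrank_sup_add_finrank_inf_eq W Wp
  have hpos : 0 < finrank ℂ ↑(W ⊓ Wp) := by omega
  obtain ⟨⟨x, hx⟩, hx0⟩ := Module.finrank_pos_iff_exists_ne_zero.mp hpos
  have hxne : x ≠ 0 := by
    intro h
    exact hx0 (by simp [h])
  have hxW : x ∈ W := hx.1
  have hxWp : x ∈ Wp := hx.2
  have h1 := re_inner_toEuclideanLin b A hA.eigenvalues hL x
  have hzero : ∀ i ∉ P, b.repr x i = 0 := fun i hi => repr_eq_zero_of_mem_span b P hxWp hi
  have h2 : (0:ℝ) < ∑ i, hA.eigenvalues i * ‖b.repr x i‖ ^ 2 := by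
    rw [← Finset.sum_subset (Finset.subset_univ P)
      (fun i _ hi => by simp [hzero i hi])]
    obtain ⟨j, hj⟩ : ∃ j, b.repr x j ≠ 0 := by
      by_contra hall
      push_neg at hall
      apply hxne
      have hrepr : b.repr x = 0 := by
        ext i
        exact hall i
      rw [← b.repr.symm_apply_apply x, hrepr, map_zero]
    have hjP : j ∈ P := by
      by_contra hjp
      exact hj (hzero j hjp)
    refine Finset.sum_pos' (fun i hi => ?_) ⟨j, hjP, ?_⟩
    · have : 0 < hA.eigenvalues i := by
        simpa [hP] using hi
      positivity
    · have h3 : 0 < hA.eigenvalues j := by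
        simpa [hP] using hjP
      have h4 : 0 < ‖b.repr x j‖ ^ 2 := pow_pos (norm_pos_iff.mpr hj) 2
      exact mul_pos h3 h4
  have := hQ x hxW
  rw [h1] at this
  linarith

/-- Mirror of `card_pos_le` for negative eigenvalues. -/
lemma card_neg_le {A : Matrix (Fin n) (Fin n) ℂ} (hA : A.IsHermitian) {q : ℕ}
    (W : Submodule ℂ (EuclideanSpace ℂ (Fin n))) (hW : n - q ≤ finrank ℂ W)
    (hQ : ∀ x ∈ W, 0 ≤ Complex.re (inner ℂ x (Matrix.toEuclideanLin A x) : ℂ)) :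
    (Finset.univ.filter fun i => hA.eigenvalues i < 0).card ≤ q := by
  by_contra hcon
  push_neg at hcon
  set b := hA.eigenvectorBasis with hb
  set N := Finset.univ.filter fun i => hA.eigenvalues i < 0 with hN
  have hNn : N.card ≤ n := le_trans (Finset.card_filter_le _ _) (by simp)
  have hL : ∀ i, Matrix.toEuclideanLin A (b i) = ((hA.eigenvalues i : ℝ) : ℂ) • b i :=
    toEuclideanLin_eigenvectorBasis hA
  set Wn := Submodule.span ℂ (b '' ↑N) with hWn
  have hdim : finrank ℂ Wn = N.card := finrank_span_image b N
  have hsup : finrank ℂ ↑(W ⊔ Wn) ≤ n :=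
    le_trans (Submodule.finrank_le _) (by simp)
  have heq := Submodule.finrank_sup_add_finrank_inf_eq W Wn
  have hpos : 0 < finrank ℂ ↑(W ⊓ Wn) := by omega
  obtain ⟨⟨x, hx⟩, hx0⟩ := Module.finrank_pos_iff_exists_ne_zero.mp hpos
  have hxne : x ≠ 0 := by
    intro h
    exact hx0 (by simp [h])
  have hxW : x ∈ W := hx.1
  have hxWn : x ∈ Wn := hx.2
  have h1 := re_inner_toEuclideanLin b A hA.eigenvalues hL x
  have hzero : ∀ i ∉ N, b.repr x i = 0 := fun i hi => repr_eq_zero_of_mem_span b N hxWn hi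
  have h2 : ∑ i, hA.eigenvalues i * ‖b.repr x i‖ ^ 2 < 0 := by
    rw [← Finset.sum_subset (Finset.subset_univ N)
      (fun i _ hi => by simp [hzero i hi])]
    obtain ⟨j, hj⟩ : ∃ j, b.repr x j ≠ 0 := by
      by_contra hall
      push_neg at hall
      apply hxne
      have hrepr : b.repr x = 0 := by
        ext i
        exact hall i
      rw [← b.repr.symm_apply_apply x, hrepr, map_zero]
    have hjN : j ∈ N := by
      by_contra hjp
      exact hj (hzero j hjp)
    have hlt : ∑ i ∈ N, hA.eigenvalues i * ‖b.repr x i‖ ^ 2 < ∑ i ∈ N, (0:ℝ) := by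
      refine Finset.sum_lt_sum (fun i hi => ?_) ⟨j, hjN, ?_⟩
      · have : hA.eigenvalues i < 0 := by
          simpa [hN] using hi
        exact mul_nonpos_iff.mpr (Or.inr ⟨this.le, sq_nonneg _⟩)
      · have h3 : hA.eigenvalues j < 0 := by
          simpa [hN] using hjN
        have h4 : 0 < ‖b.repr x j‖ ^ 2 := pow_pos (norm_pos_iff.mpr hj) 2
        nlinarith
    simpa using hlt
  have := hQ x hxW
  rw [h1] at this
  linarith

end SpqAux

open SpqAux Module

theorem Spq_add (n p q r s : ℕ) :
    Spq n p q + Spq n r s = Spq n (p + r) (q + s) := by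
  classical
  ext M
  constructor
  · rintro hM
    rw [Set.mem_add] at hM
    obtain ⟨T, ⟨hT, hTp, hTq⟩, S, ⟨hS, hSr, hSs⟩, rfl⟩ := hM
    have hTS : (T + S).IsHermitian := hT.add hS
    refine ⟨hTS, ?_, ?_⟩
    · -- positive eigenvalues of the sum
      obtain ⟨WT, hWTdim, hWTq⟩ :
          ∃ W : Submodule ℂ (EuclideanSpace ℂ (Fin n)),
            finrank ℂ W = n - (Finset.univ.filter fun i => 0 < hT.eigenvalues i).card ∧
            ∀ x ∈ W, Complex.re (inner ℂ x (Matrix.toEuclideanLin T x) : ℂ) ≤ 0 := by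
        refine ⟨Submodule.span ℂ (hT.eigenvectorBasis ''
          ↑(Finset.univ.filter fun i => 0 < hT.eigenvalues i)ᶜ), ?_, ?_⟩
        · rw [finrank_span_image, Finset.card_compl]
          simp
        · intro x hx
          refine qf_nonpos_on_span hT.eigenvectorBasis
            (toEuclideanLin_eigenvectorBasis hT) _ (fun i hi => ?_) hx
          simp only [Finset.mem_compl, Finset.mem_filter, Finset.mem_univ, true_and] at hi
          linarith [not_lt.mp hi]
      obtain ⟨WS, hWSdim, hWSq⟩ :
          ∃ W : Submodule ℂ (EuclideanSpace ℂ (Fin n)),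
            finrank ℂ W = n - (Finset.univ.filter fun i => 0 < hS.eigenvalues i).card ∧
            ∀ x ∈ W, Complex.re (inner ℂ x (Matrix.toEuclideanLin S x) : ℂ) ≤ 0 := by
        refine ⟨Submodule.span ℂ (hS.eigenvectorBasis ''
          ↑(Finset.univ.filter fun i => 0 < hS.eigenvalues i)ᶜ), ?_, ?_⟩
        · rw [finrank_span_image, Finset.card_compl]
          simp
        · intro x hx
          refine qf_nonpos_on_span hS.eigenvectorBasis
            (toEuclideanLin_eigenvectorBasis hS) _ (fun i hi => ?_) hx
          simp only [Finset.mem_compl, Finset.mem_filter, Finset.mem_univ, true_and] at hi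
          linarith [not_lt.mp hi]
      have hsup : finrank ℂ ↑(WT ⊔ WS) ≤ n :=
        le_trans (Submodule.finrank_le _) (by simp)
      have heq := Submodule.finrank_sup_add_finrank_inf_eq WT WS
      refine card_pos_le hTS (WT ⊓ WS) (by omega) (fun x hx => ?_)
      have h1 := hWTq x hx.1
      have h2 := hWSq x hx.2
      have hadd : (inner ℂ x (Matrix.toEuclideanLin (T + S) x) : ℂ)
          = inner ℂ x (Matrix.toEuclideanLin T x) + inner ℂ x (Matrix.toEuclideanLin S x) := by
        rw [map_add, LinearMap.add_apply, inner_add_right]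
      rw [hadd, Complex.add_re]
      linarith
    · -- negative eigenvalues of the sum
      obtain ⟨WT, hWTdim, hWTq⟩ :
          ∃ W : Submodule ℂ (EuclideanSpace ℂ (Fin n)),
            finrank ℂ W = n - (Finset.univ.filter fun i => hT.eigenvalues i < 0).card ∧
            ∀ x ∈ W, 0 ≤ Complex.re (inner ℂ x (Matrix.toEuclideanLin T x) : ℂ) := by
        refine ⟨Submodule.span ℂ (hT.eigenvectorBasis ''
          ↑(Finset.univ.filter fun i => hT.eigenvalues i < 0)ᶜ), ?_, ?_⟩
        · rw [finrank_span_image, Finset.card_compl]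
          simp
        · intro x hx
          refine qf_nonneg_on_span hT.eigenvectorBasis
            (toEuclideanLin_eigenvectorBasis hT) _ (fun i hi => ?_) hx
          simp only [Finset.mem_compl, Finset.mem_filter, Finset.mem_univ, true_and] at hi
          linarith [not_lt.mp hi]
      obtain ⟨WS, hWSdim, hWSq⟩ :
          ∃ W : Submodule ℂ (EuclideanSpace ℂ (Fin n)),
            finrank ℂ W = n - (Finset.univ.filter fun i => hS.eigenvalues i < 0).card ∧
            ∀ x ∈ W, 0 ≤ Complex.re (inner ℂ x (Matrix.toEuclideanLin S x) : ℂ) := by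
        refine ⟨Submodule.span ℂ (hS.eigenvectorBasis ''
          ↑(Finset.univ.filter fun i => hS.eigenvalues i < 0)ᶜ), ?_, ?_⟩
        · rw [finrank_span_image, Finset.card_compl]
          simp
        · intro x hx
          refine qf_nonneg_on_span hS.eigenvectorBasis
            (toEuclideanLin_eigenvectorBasis hS) _ (fun i hi => ?_) hx
          simp only [Finset.mem_compl, Finset.mem_filter, Finset.mem_univ, true_and] at hi
          linarith [not_lt.mp hi]
      have hsup : finrank ℂ ↑(WT ⊔ WS) ≤ n :=
        le_trans (Submodule.finrank_le _) (by simp)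
      have heq := Submodule.finrank_sup_add_finrank_inf_eq WT WS
      refine card_neg_le hTS (WT ⊓ WS) (by omega) (fun x hx => ?_)
      have h1 := hWTq x hx.1
      have h2 := hWSq x hx.2
      have hadd : (inner ℂ x (Matrix.toEuclideanLin (T + S) x) : ℂ)
          = inner ℂ x (Matrix.toEuclideanLin T x) + inner ℂ x (Matrix.toEuclideanLin S x) := by
        rw [map_add, LinearMap.add_apply, inner_add_right]
      rw [hadd, Complex.add_re]
      linarith
  · rintro ⟨hM, hp, hq⟩
    set lam := hM.eigenvalues with hlam
    set P := Finset.univ.filter fun i => 0 < lam i with hPdef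
    set N := Finset.univ.filter fun i => lam i < 0 with hNdef
    obtain ⟨P₁, hP₁sub, hP₁card⟩ := Finset.exists_subset_card_eq (min_le_left P.card p)
    obtain ⟨N₁, hN₁sub, hN₁card⟩ := Finset.exists_subset_card_eq (min_le_left N.card q)
    set μ : Fin n → ℝ := fun i => if i ∈ P₁ ∪ N₁ then lam i else 0 with hμdef
    set ν : Fin n → ℝ := fun i => lam i - μ i with hνdef
    set U : Matrix (Fin n) (Fin n) ℂ := (hM.eigenvectorUnitary : Matrix (Fin n) (Fin n) ℂ) with hUdef
    set T : Matrix (Fin n) (Fin n) ℂ := U * Matrix.diagonal (RCLike.ofReal ∘ μ) * star U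
      with hTdef
    set S : Matrix (Fin n) (Fin n) ℂ := U * Matrix.diagonal (RCLike.ofReal ∘ ν) * star U
      with hSdef
    have hT : T.IsHermitian := by
      rw [hTdef, Matrix.star_eq_conjTranspose]
      exact Matrix.isHermitian_mul_mul_conjTranspose U
        (Matrix.isHermitian_diagonal_iff.mpr fun i => by
          rw [_root_.isSelfAdjoint_iff]
          exact RCLike.conj_ofReal _)
    have hS : S.IsHermitian := by
      rw [hSdef, Matrix.star_eq_conjTranspose]
      exact Matrix.isHermitian_mul_mul_conjTranspose U
        (Matrix.isHermitian_diagonal_iff.mpr fun i => by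
          rw [_root_.isSelfAdjoint_iff]
          exact RCLike.conj_ofReal _)
    -- the conjugated matrices act diagonally on the eigenbasis of M
    have hact : ∀ (κ : Fin n → ℝ) (i : Fin n),
        Matrix.toEuclideanLin (U * Matrix.diagonal (RCLike.ofReal ∘ κ) * star U)
          (hM.eigenvectorBasis i) = ((κ i : ℝ) : ℂ) • hM.eigenvectorBasis i := by
      intro κ i
      apply (WithLp.equiv 2 (Fin n → ℂ)).injective
      rw [WithLp.equiv_apply, Matrix.ofLp_toEuclideanLin_apply]
      have hmv : (U * Matrix.diagonal (RCLike.ofReal ∘ κ) * star U) *ᵥ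
          ⇑(hM.eigenvectorBasis i) = ((κ i : ℂ)) • ⇑(hM.eigenvectorBasis i) := by
        rw [← Matrix.mulVec_mulVec, ← Matrix.mulVec_mulVec, hUdef,
          hM.star_eigenvectorUnitary_mulVec, Matrix.diagonal_mulVec_single]
        funext k
        simp [Matrix.mulVec_single, mul_comm]
      funext j
      have hj := congrFun hmv j
      simpa using hj
    have hμP : ∀ i ∉ P₁, μ i ≤ 0 := by
      intro i hi
      rw [hμdef]
      by_cases h : i ∈ P₁ ∪ N₁
      · have hiN : i ∈ N₁ := by
          rcases Finset.mem_union.mp h with h' | h'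
          · exact absurd h' hi
          · exact h'
        have : lam i < 0 := by
          have := hN₁sub hiN
          simpa [hNdef] using this
        simp only [h, if_true]
        linarith
      · simp [h]
    have hμN : ∀ i ∉ N₁, 0 ≤ μ i := by
      intro i hi
      rw [hμdef]
      by_cases h : i ∈ P₁ ∪ N₁
      · have hiP : i ∈ P₁ := by
          rcases Finset.mem_union.mp h with h' | h'
          · exact h'
          · exact absurd h' hi
        have : 0 < lam i := by
          have := hP₁sub hiP
          simpa [hPdef] using this
        simp only [h, if_true]
        linarith
      · simp [h]
    have hν0 : ∀ i ∈ P₁ ∪ N₁, ν i = 0 := by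
      intro i hi
      rw [hνdef, hμdef]
      simp [hi]
    have hνeq : ∀ i ∉ P₁ ∪ N₁, ν i = lam i := by
      intro i hi
      rw [hνdef, hμdef]
      simp [hi]
    have hνP : ∀ i ∉ P \ P₁, ν i ≤ 0 := by
      intro i hi
      by_cases h : i ∈ P₁ ∪ N₁
      · rw [hν0 i h]
      · rw [hνeq i h]
        by_cases hiP : i ∈ P
        · exact absurd (Finset.mem_sdiff.mpr ⟨hiP, fun h' =>
            h (Finset.mem_union_left _ h')⟩) hi
        · have : ¬ (0 < lam i) := by
            intro hl
            exact hiP (by simp [hPdef, hl])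
          linarith [not_lt.mp this]
    have hνN : ∀ i ∉ N \ N₁, 0 ≤ ν i := by
      intro i hi
      by_cases h : i ∈ P₁ ∪ N₁
      · rw [hν0 i h]
      · rw [hνeq i h]
        by_cases hiN : i ∈ N
        · exact absurd (Finset.mem_sdiff.mpr ⟨hiN, fun h' =>
            h (Finset.mem_union_right _ h')⟩) hi
        · have : ¬ (lam i < 0) := by
            intro hl
            exact hiN (by simp [hNdef, hl])
          linarith [not_lt.mp this]
    have hPn : P.card ≤ n := le_trans (Finset.card_filter_le _ _) (by simp)
    have hNn : N.card ≤ n := le_trans (Finset.card_filter_le _ _) (by simp)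
    -- membership bounds via the subspace criterion
    have memT : T ∈ Spq n p q := by
      refine ⟨hT, ?_, ?_⟩
      · refine card_pos_le hT (Submodule.span ℂ (hM.eigenvectorBasis '' ↑P₁ᶜ)) ?_
          (fun x hx => qf_nonpos_on_span hM.eigenvectorBasis (hact μ) P₁ᶜ
            (fun i hi => hμP i (Finset.mem_compl.mp hi)) hx)
        rw [finrank_span_image, Finset.card_compl]
        have : P₁.card ≤ p := by omega
        simp only [Fintype.card_fin]
        omega
      · refine card_neg_le hT (Submodule.span ℂ (hM.eigenvectorBasis '' ↑N₁ᶜ)) ?_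
          (fun x hx => qf_nonneg_on_span hM.eigenvectorBasis (hact μ) N₁ᶜ
            (fun i hi => hμN i (Finset.mem_compl.mp hi)) hx)
        rw [finrank_span_image, Finset.card_compl]
        have : N₁.card ≤ q := by omega
        simp only [Fintype.card_fin]
        omega
    have memS : S ∈ Spq n r s := by
      have hP2 : (P \ P₁).card ≤ r := by
        rw [Finset.card_sdiff_of_subset hP₁sub]
        omega
      have hN2 : (N \ N₁).card ≤ s := by
        rw [Finset.card_sdiff_of_subset hN₁sub]
        omega
      refine ⟨hS, ?_, ?_⟩
      · refine card_pos_le hS (Submodule.span ℂ (hM.eigenvectorBasis '' ↑(P \ P₁)ᶜ)) ?_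
          (fun x hx => qf_nonpos_on_span hM.eigenvectorBasis (hact ν) (P \ P₁)ᶜ
            (fun i hi => hνP i (Finset.mem_compl.mp hi)) hx)
        rw [finrank_span_image, Finset.card_compl]
        simp only [Fintype.card_fin]
        omega
      · refine card_neg_le hS (Submodule.span ℂ (hM.eigenvectorBasis '' ↑(N \ N₁)ᶜ)) ?_
          (fun x hx => qf_nonneg_on_span hM.eigenvectorBasis (hact ν) (N \ N₁)ᶜ
            (fun i hi => hνN i (Finset.mem_compl.mp hi)) hx)
        rw [finrank_span_image, Finset.card_compl]
        simp only [Fintype.card_fin]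
        omega
    have hsum : T + S = M := by
      rw [hTdef, hSdef]
      have hdiag : (Matrix.diagonal (RCLike.ofReal ∘ μ) : Matrix (Fin n) (Fin n) ℂ)
            + Matrix.diagonal (RCLike.ofReal ∘ ν)
          = Matrix.diagonal (RCLike.ofReal ∘ lam) := by
        have hfun : (RCLike.ofReal ∘ μ : Fin n → ℂ) + (RCLike.ofReal ∘ ν)
            = RCLike.ofReal ∘ lam := by
          funext i
          simp only [Pi.add_apply, Function.comp_apply, hνdef]
          push_cast
          ring
        rw [Matrix.diagonal_add]
        exact congrArg Matrix.diagonal (by funext i; simpa using congrFun hfun i)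
      calc U * Matrix.diagonal (RCLike.ofReal ∘ μ) * star U
            + U * Matrix.diagonal (RCLike.ofReal ∘ ν) * star U
          = U * (Matrix.diagonal (RCLike.ofReal ∘ μ)
              + Matrix.diagonal (RCLike.ofReal ∘ ν)) * star U := by
            rw [Matrix.mul_add, Matrix.add_mul]
        _ = U * Matrix.diagonal (RCLike.ofReal ∘ lam) * star U := by rw [hdiag]
        _ = M := (hM.spectral_theorem).symm
    rw [Set.mem_add]
    exact ⟨T, memT, S, memS, hsum⟩
end

section
/- A Hermitian n×n complex matrix T belongs to S^{1,1} if and only if T = ⊙(x,y) := (x y* + y x*)/2 for some column vectors x, y ∈ ℂⁿ. Equivalently, a Hermitian matrix has at most one strictly positive and at most one strictly negative eigenvalue if and only if it is a symmetric outer product ⊙(x,y). -/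
open Matrix Finset

/-- Symmetric outer product `⊙(x,y) = (x y* + y x*)/2`. -/
noncomputable def symOuter {n : ℕ} (x y : Fin n → ℂ) : Matrix (Fin n) (Fin n) ℂ :=
  (2⁻¹ : ℂ) • (Matrix.vecMulVec x (star y) + Matrix.vecMulVec y (star x))

/-- Rank-one spectral decomposition of a Hermitian matrix. -/
lemma symOuter_decomp_aux {n : ℕ} {T : Matrix (Fin n) (Fin n) ℂ} (hT : T.IsHermitian) :
    T = ∑ i, (hT.eigenvalues i : ℂ) •
      vecMulVec ⇑(hT.eigenvectorBasis i) (star ⇑(hT.eigenvectorBasis i)) := by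
  conv_lhs => rw [hT.spectral_theorem]
  ext a b
  simp [Matrix.mul_apply, Matrix.diagonal, vecMulVec, Matrix.sum_apply,
    Finset.sum_mul, mul_comm, mul_assoc, mul_left_comm]

/-- The key construction: a nonnegative rank-one plus a nonpositive rank-one Hermitian
matrix is a symmetric outer product. -/
lemma symOuter_construct {n : ℕ} (α β : ℝ) (hα : 0 ≤ α) (hβ : β ≤ 0) (u v : Fin n → ℂ) :
    (α : ℂ) • vecMulVec u (star u) + (β : ℂ) • vecMulVec v (star v)
      = symOuter ((Real.sqrt α : ℂ) • u + (Complex.I * (Real.sqrt (-β) : ℂ)) • v)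
                 ((Real.sqrt α : ℂ) • u - (Complex.I * (Real.sqrt (-β) : ℂ)) • v) := by
  have hp : (Real.sqrt α : ℂ) * (Real.sqrt α : ℂ) = (α : ℂ) := by
    rw [← Complex.ofReal_mul, Real.mul_self_sqrt hα]
  have hq : (Real.sqrt (-β) : ℂ) * (Real.sqrt (-β) : ℂ) = (-β : ℝ) := by
    rw [← Complex.ofReal_mul, Real.mul_self_sqrt (by linarith)]
  ext a b
  simp only [symOuter, vecMulVec, Matrix.smul_apply, Matrix.add_apply, Matrix.sub_apply,
    Matrix.of_apply, Pi.add_apply, Pi.sub_apply, Pi.smul_apply, Pi.star_apply, smul_eq_mul,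
    star_add, star_sub, star_mul', RCLike.star_def, _root_.map_mul, Complex.conj_ofReal,
    Complex.conj_I]
  push_cast at hq ⊢
  linear_combination (-1 * (u a * (starRingEnd ℂ) (u b))) * hp +
    (1 * (v a * (starRingEnd ℂ) (v b))) * hq +
    (-1 * (v a * (starRingEnd ℂ) (v b)) * (Real.sqrt (-β):ℂ) * (Real.sqrt (-β):ℂ)) * Complex.I_mul_I

/-- Collapsing a sum over a finset of cardinality at most one. -/
lemma sumCollapse_aux {n : ℕ} (p : ℝ → Prop) (hp0 : p 0) (f : Fin n → ℝ)
    (g : Fin n → (Fin n → ℂ)) (s : Finset (Fin n)) (hs : s.card ≤ 1)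
    (hsign : ∀ i ∈ s, p (f i)) :
    ∃ α : ℝ, p α ∧ ∃ u : Fin n → ℂ,
      ∑ i ∈ s, (f i : ℂ) • vecMulVec (g i) (star (g i)) = (α : ℂ) • vecMulVec u (star u) := by
  rcases s.eq_empty_or_nonempty with rfl | ⟨i, hi⟩
  · exact ⟨0, hp0, 0, by simp⟩
  · have hsing : s = {i} :=
      Finset.eq_singleton_iff_unique_mem.2 ⟨hi, fun j hj => Finset.card_le_one.mp hs j hj i hi⟩
    exact ⟨f i, hsign i hi, g i, by rw [hsing, Finset.sum_singleton]⟩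

lemma symOuter_quad {n : ℕ} (x y z : Fin n → ℂ) :
    star z ⬝ᵥ (symOuter x y *ᵥ z)
      = 2⁻¹ * ((star z ⬝ᵥ x) * (star y ⬝ᵥ z) + (star z ⬝ᵥ y) * (star x ⬝ᵥ z)) := by
  have hv : ∀ p q r : Fin n → ℂ, vecMulVec p q *ᵥ r = (q ⬝ᵥ r) • p := by
    intro p q r
    ext a
    simp [vecMulVec, mulVec, dotProduct, Finset.mul_sum, mul_comm, mul_assoc, mul_left_comm]
  simp only [symOuter, smul_mulVec, add_mulVec, hv, dotProduct_smul, dotProduct_add,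
    smul_eq_mul]
  ring

lemma eig_dot {n : ℕ} {T : Matrix (Fin n) (Fin n) ℂ} (hT : T.IsHermitian) (k l : Fin n) :
    star ⇑(hT.eigenvectorBasis k) ⬝ᵥ ⇑(hT.eigenvectorBasis l) = if k = l then 1 else 0 := by
  rw [dotProduct_comm]; exact orthonormal_iff_ite.mp hT.eigenvectorBasis.orthonormal k l

lemma quad_zero {n : ℕ} (x y : Fin n → ℂ) (hT : (symOuter x y).IsHermitian)
    (i j : Fin n) (hij : i ≠ j) :
    ∃ c₁ c₂ : ℂ, ¬(c₁ = 0 ∧ c₂ = 0) ∧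
      hT.eigenvalues i * Complex.normSq c₁ + hT.eigenvalues j * Complex.normSq c₂ = 0 := by
  set u := ⇑(hT.eigenvectorBasis i) with hu
  set w := ⇑(hT.eigenvectorBasis j) with hw
  set a := star y ⬝ᵥ u with ha
  set b := star y ⬝ᵥ w with hb
  obtain ⟨c₁, c₂, hc, hzero⟩ : ∃ c₁ c₂ : ℂ, ¬(c₁ = 0 ∧ c₂ = 0) ∧ c₁ * a + c₂ * b = 0 := by
    by_cases h : a = 0 ∧ b = 0
    · exact ⟨1, 0, by simp, by simp [h.1, h.2]⟩
    · exact ⟨b, -a, fun hh => h ⟨neg_eq_zero.mp hh.2, hh.1⟩, by ring⟩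
  refine ⟨c₁, c₂, hc, ?_⟩
  set z := c₁ • u + c₂ • w with hz
  have hyz : star y ⬝ᵥ z = 0 := by
    simp [hz, dotProduct_add, dotProduct_smul, ← ha, ← hb, smul_eq_mul]
    linear_combination hzero
  have hzy : star z ⬝ᵥ y = 0 := by
    rw [star_dotProduct]
    simp [hyz]
  have hQ0 : star z ⬝ᵥ (symOuter x y *ᵥ z) = 0 := by
    rw [symOuter_quad, hyz, hzy]; ring
  have hQ : star z ⬝ᵥ (symOuter x y *ᵥ z)
      = (hT.eigenvalues i : ℂ) * (star c₁ * c₁) + (hT.eigenvalues j : ℂ) * (star c₂ * c₂) := by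
    rw [hz, mulVec_add, mulVec_smul, mulVec_smul, hu, hw,
      hT.mulVec_eigenvectorBasis i, hT.mulVec_eigenvectorBasis j]
    simp [star_add, star_smul, add_dotProduct, dotProduct_add, smul_dotProduct,
      dotProduct_smul, eig_dot hT, hij, hij.symm, if_neg]
    ring
  rw [hQ0] at hQ
  have := congrArg Complex.re hQ.symm
  simpa [Complex.normSq_eq_conj_mul_self, ← Complex.ofReal_mul, ← Complex.ofReal_add, Complex.normSq_apply] using this

theorem mem_S11_iff_symOuter (n : ℕ) (T : Matrix (Fin n) (Fin n) ℂ) (hT : T.IsHermitian) :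
    T ∈ Spq n 1 1 ↔ ∃ x y : Fin n → ℂ, T = symOuter x y := by
  constructor
  · rintro ⟨hT', hP, hN⟩
    have hTT : hT' = hT := Subsingleton.elim _ _
    subst hTT
    set P := Finset.univ.filter fun i => 0 < hT'.eigenvalues i with hPdef
    set N := Finset.univ.filter fun i => hT'.eigenvalues i < 0 with hNdef
    have hdisj : Disjoint P N := by
      rw [Finset.disjoint_left]
      intro k hk1 hk2
      rw [hPdef, Finset.mem_filter] at hk1
      rw [hNdef, Finset.mem_filter] at hk2
      linarith [hk1.2, hk2.2]
    have hsum : T = ∑ i ∈ P ∪ N, (hT'.eigenvalues i : ℂ) •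
        vecMulVec ⇑(hT'.eigenvectorBasis i) (star ⇑(hT'.eigenvectorBasis i)) := by
      conv_lhs => rw [symOuter_decomp_aux hT']
      refine (Finset.sum_subset (Finset.subset_univ _) ?_).symm
      intro k _ hk
      have h0 : hT'.eigenvalues k = 0 := by
        simp only [Finset.mem_union, hPdef, hNdef, Finset.mem_filter, Finset.mem_univ,
          true_and, not_or, not_lt] at hk
        linarith [hk.1, hk.2]
      simp [h0]
    have hsum2 := hsum.trans (Finset.sum_union hdisj)
    obtain ⟨α, hα, u, hu⟩ := sumCollapse_aux (fun r => 0 ≤ r) le_rfl hT'.eigenvalues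
      (fun i => ⇑(hT'.eigenvectorBasis i)) P hP
      (fun i hi => le_of_lt (Finset.mem_filter.mp hi).2)
    obtain ⟨β, hβ, v, hv⟩ := sumCollapse_aux (fun r => r ≤ 0) le_rfl hT'.eigenvalues
      (fun i => ⇑(hT'.eigenvectorBasis i)) N hN
      (fun i hi => le_of_lt (Finset.mem_filter.mp hi).2)
    rw [hu, hv] at hsum2
    exact ⟨_, _, hsum2.trans (symOuter_construct α β hα hβ u v)⟩
  · rintro ⟨x, y, rfl⟩
    refine ⟨hT, ?_, ?_⟩
    · by_contra h
      push_neg at h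
      obtain ⟨i, hi, j, hj, hij⟩ := Finset.one_lt_card.mp h
      rw [Finset.mem_filter] at hi hj
      obtain ⟨c₁, c₂, hc, heq⟩ := quad_zero x y hT i j hij
      have h1 : Complex.normSq c₁ = 0 := by
        nlinarith [Complex.normSq_nonneg c₁, Complex.normSq_nonneg c₂, hi.2, hj.2]
      have h2 : Complex.normSq c₂ = 0 := by
        nlinarith [Complex.normSq_nonneg c₁, Complex.normSq_nonneg c₂, hi.2, hj.2]
      exact hc ⟨Complex.normSq_eq_zero.mp h1, Complex.normSq_eq_zero.mp h2⟩
    · by_contra h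
      push_neg at h
      obtain ⟨i, hi, j, hj, hij⟩ := Finset.one_lt_card.mp h
      rw [Finset.mem_filter] at hi hj
      obtain ⟨c₁, c₂, hc, heq⟩ := quad_zero x y hT i j hij
      have h1 : Complex.normSq c₁ = 0 := by
        nlinarith [Complex.normSq_nonneg c₁, Complex.normSq_nonneg c₂, hi.2, hj.2]
      have h2 : Complex.normSq c₂ = 0 := by
        nlinarith [Complex.normSq_nonneg c₁, Complex.normSq_nonneg c₂, hi.2, hj.2]
      exact hc ⟨Complex.normSq_eq_zero.mp h1, Complex.normSq_eq_zero.mp h2⟩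
end

section
/- Let n ≥ 2 and u, v ∈ ℂⁿ, and set T = ⊙(u,v) = (u v* + v u*)/2. Then the multiset of eigenvalues of the Hermitian matrix T consists of a₊ = (Re⟨u,v⟩ + √(‖u‖²‖v‖² − (Im⟨u,v⟩)²))/2 ≥ 0, a₋ = (Re⟨u,v⟩ − √(‖u‖²‖v‖² − (Im⟨u,v⟩)²))/2 ≤ 0, and 0 with multiplicity n−2. Consequently the sum of the absolute values of the eigenvalues of T equals √(‖u‖²‖v‖² − (Im⟨u,v⟩)²), and the sum of the squares of the eigenvalues of T (i.e., trace(T²)) equals (‖u‖²‖v‖² + (Re⟨u,v⟩)² − (Im⟨u,v⟩)²)/2. -/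
open Matrix Finset

/-- Standard inner product on `ℂⁿ`, linear in the first argument. -/
noncomputable def cip {n : ℕ} (x y : Fin n → ℂ) : ℂ := ∑ i, x i * starRingEnd ℂ (y i)

/-- Squared Euclidean norm on `ℂⁿ`. -/
noncomputable def cnormSq {n : ℕ} (x : Fin n → ℂ) : ℝ := ∑ i, Complex.normSq (x i)

open Polynomial in
lemma my_eval_charpoly {n : ℕ} (M : Matrix (Fin n) (Fin n) ℂ) (r : ℂ) :
    M.charpoly.eval r = (r • (1 : Matrix (Fin n) (Fin n) ℂ) - M).det := by
  rw [Matrix.charpoly, _root_.eval_det, matPolyEquiv_charmatrix]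
  simp [smul_eq_diagonal_mul]

open Polynomial in
lemma charpoly_hermitian {n : ℕ} (A : Matrix (Fin n) (Fin n) ℂ) (hA : A.IsHermitian) :
    A.charpoly = ∏ i, (X - C ((hA.eigenvalues i : ℂ))) := by
  apply Polynomial.funext
  intro r
  rw [my_eval_charpoly]
  set U : Matrix (Fin n) (Fin n) ℂ := (hA.eigenvectorUnitary : Matrix (Fin n) (Fin n) ℂ)
  set D : Matrix (Fin n) (Fin n) ℂ := Matrix.diagonal (RCLike.ofReal ∘ hA.eigenvalues)
  have hU : U * star U = 1 := (Matrix.mem_unitaryGroup_iff).mp hA.eigenvectorUnitary.2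
  have hA' : A = U * D * star U := hA.spectral_theorem
  have key : r • (1 : Matrix (Fin n) (Fin n) ℂ) - A = U * (r • 1 - D) * star U := by
    rw [hA', Matrix.mul_sub, Matrix.sub_mul, Matrix.mul_smul, Matrix.mul_one,
      Matrix.smul_mul, hU]
  rw [key, Matrix.det_mul, Matrix.det_mul]
  have h2 : U.det * (r • 1 - D).det * (star U).det = (r • 1 - D).det * (U * star U).det := by
    rw [Matrix.det_mul]; ring
  rw [h2, hU, Matrix.det_one, mul_one]
  have : r • (1 : Matrix (Fin n) (Fin n) ℂ) - D
      = Matrix.diagonal (fun i => r - (hA.eigenvalues i : ℂ)) := by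
    ext i j
    by_cases h : i = j <;>
      simp [Matrix.diagonal_apply, Matrix.one_apply, h, D]
  rw [this, Matrix.det_diagonal]
  simp [eval_prod]

lemma det_key (n : ℕ) (hn : 2 ≤ n) (u v : Fin n → ℂ) (x : ℂ) (hx : x ≠ 0) :
    (x • (1 : Matrix (Fin n) (Fin n) ℂ) - symOuter u v).det
      = x ^ (n - 2) * (x ^ 2 - (((∑ i, u i * starRingEnd ℂ (v i)).re : ℝ) : ℂ) * x
        + ((Complex.normSq (∑ i, u i * starRingEnd ℂ (v i)) : ℂ)
            - ((∑ i, Complex.normSq (u i) : ℝ) : ℂ) * ((∑ i, Complex.normSq (v i) : ℝ) : ℂ)) / 4) := by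
  classical
  set c : ℂ := ∑ i, u i * starRingEnd ℂ (v i) with hc
  set A : Matrix (Fin n) (Fin 2) ℂ := Matrix.of (fun i k => if k = 0 then u i else v i) with hA
  set B : Matrix (Fin 2) (Fin n) ℂ :=
    Matrix.of (fun k j => -(2 * x)⁻¹ * (if k = 0 then starRingEnd ℂ (v j) else starRingEnd ℂ (u j)))
    with hB
  have key : x • (1 : Matrix (Fin n) (Fin n) ℂ) - symOuter u v = x • (1 + A * B) := by
    ext i j
    simp only [Matrix.sub_apply, Matrix.smul_apply, Matrix.add_apply, Matrix.mul_apply,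
      Matrix.one_apply, symOuter, Matrix.vecMulVec_apply, Pi.star_apply, hA, hB,
      Matrix.of_apply, Fin.sum_univ_two]
    simp only [if_true, if_neg (by decide : ¬ (1 : Fin 2) = 0), smul_eq_mul, RCLike.star_def]
    field_simp
    split_ifs <;> ring
  rw [key, Matrix.det_smul, Matrix.det_one_add_mul_comm]
  have h00 : ∑ j, (-(2 * x)⁻¹ * starRingEnd ℂ (v j)) * u j = -(2 * x)⁻¹ * c := by
    rw [hc, Finset.mul_sum]; exact Finset.sum_congr rfl fun j _ => by ring
  have h01 : ∑ j, (-(2 * x)⁻¹ * starRingEnd ℂ (v j)) * v j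
      = -(2 * x)⁻¹ * ((∑ i, Complex.normSq (v i) : ℝ) : ℂ) := by
    push_cast
    rw [Finset.mul_sum]
    refine Finset.sum_congr rfl fun j _ => ?_
    rw [← Complex.mul_conj]; ring
  have h10 : ∑ j, (-(2 * x)⁻¹ * starRingEnd ℂ (u j)) * u j
      = -(2 * x)⁻¹ * ((∑ i, Complex.normSq (u i) : ℝ) : ℂ) := by
    push_cast
    rw [Finset.mul_sum]
    refine Finset.sum_congr rfl fun j _ => ?_
    rw [← Complex.mul_conj]; ring
  have h11 : ∑ j, (-(2 * x)⁻¹ * starRingEnd ℂ (u j)) * v j = -(2 * x)⁻¹ * starRingEnd ℂ c := by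
    rw [hc, map_sum, Finset.mul_sum]
    refine Finset.sum_congr rfl fun j _ => ?_
    rw [_root_.map_mul, Complex.conj_conj]; ring
  have hBA : B * A = Matrix.of (fun k l : Fin 2 =>
      -(2 * x)⁻¹ * (if k = 0 then (if l = 0 then c else ((∑ i, Complex.normSq (v i) : ℝ) : ℂ))
        else (if l = 0 then ((∑ i, Complex.normSq (u i) : ℝ) : ℂ) else starRingEnd ℂ c))) := by
    ext k l
    fin_cases k <;> fin_cases l <;>
      simp only [Matrix.mul_apply, hA, hB, Matrix.of_apply, Fin.isValue, if_true,
        if_neg (by decide : ¬ (1 : Fin 2) = 0), Fin.zero_eta, Fin.mk_one] <;>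
      first
        | exact h00 | exact h01 | exact h10 | exact h11
  rw [hBA]
  rw [Matrix.det_fin_two]
  simp only [Matrix.add_apply, Matrix.of_apply, Matrix.one_apply, if_true,
    if_neg (by decide : ¬ (1 : Fin 2) = 0), if_neg (by decide : ¬ (0 : Fin 2) = 1)]
  rw [Fintype.card_fin]
  obtain ⟨m, rfl⟩ : ∃ m, n = m + 2 := ⟨n - 2, by omega⟩
  simp only [Nat.add_sub_cancel]
  have h1 : ((c.re : ℝ) : ℂ) = (c + starRingEnd ℂ c) / 2 := by
    rw [Complex.add_conj]; push_cast; ring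
  have h2 : ((Complex.normSq c : ℝ) : ℂ) = c * starRingEnd ℂ c := (Complex.mul_conj c).symm
  rw [h1, h2, pow_add]
  field_simp
  ring

lemma cs_lemma {n : ℕ} (u v : Fin n → ℂ) :
    Complex.normSq (∑ i, u i * starRingEnd ℂ (v i))
      ≤ (∑ i, Complex.normSq (u i)) * (∑ i, Complex.normSq (v i)) := by
  classical
  set U : EuclideanSpace ℂ (Fin n) := (WithLp.equiv 2 _).symm u with hU
  set V : EuclideanSpace ℂ (Fin n) := (WithLp.equiv 2 _).symm v with hV
  have hinner : (inner ℂ V U : ℂ) = ∑ i, u i * starRingEnd ℂ (v i) := by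
    simp [PiLp.inner_apply, hU, hV, RCLike.inner_apply, mul_comm]
  have hnu : ‖U‖ ^ 2 = ∑ i, Complex.normSq (u i) := by
    rw [EuclideanSpace.norm_eq, Real.sq_sqrt (by positivity)]
    exact Finset.sum_congr rfl fun i _ => by
      simp [hU, Complex.sq_norm]
  have hnv : ‖V‖ ^ 2 = ∑ i, Complex.normSq (v i) := by
    rw [EuclideanSpace.norm_eq, Real.sq_sqrt (by positivity)]
    exact Finset.sum_congr rfl fun i _ => by
      simp [hV, Complex.sq_norm]
  have h := norm_inner_le_norm (𝕜 := ℂ) V U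
  have h2 : ‖(inner ℂ V U : ℂ)‖ ^ 2 ≤ (‖V‖ * ‖U‖) ^ 2 := by
    apply pow_le_pow_left₀ (norm_nonneg _) h
  rw [hinner] at h2
  rw [← hnu, ← hnv]
  calc Complex.normSq (∑ i, u i * starRingEnd ℂ (v i))
      = ‖∑ i, u i * starRingEnd ℂ (v i)‖ ^ 2 := by
        rw [Complex.sq_norm]
    _ ≤ (‖V‖ * ‖U‖) ^ 2 := h2
    _ = ‖U‖ ^ 2 * ‖V‖ ^ 2 := by ring

open Polynomial in
theorem eigenvalues_symOuter (n : ℕ) (hn : 2 ≤ n) (u v : Fin n → ℂ)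
    (hT : (symOuter u v).IsHermitian) :
    0 ≤ ((cip u v).re + Real.sqrt (cnormSq u * cnormSq v - (cip u v).im ^ 2)) / 2 ∧
    ((cip u v).re - Real.sqrt (cnormSq u * cnormSq v - (cip u v).im ^ 2)) / 2 ≤ 0 ∧
    (Finset.univ.val.map hT.eigenvalues) =
      (((cip u v).re + Real.sqrt (cnormSq u * cnormSq v - (cip u v).im ^ 2)) / 2) ::ₘ
      (((cip u v).re - Real.sqrt (cnormSq u * cnormSq v - (cip u v).im ^ 2)) / 2) ::ₘ
      Multiset.replicate (n - 2) (0 : ℝ) ∧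
    (∑ i, |hT.eigenvalues i|) = Real.sqrt (cnormSq u * cnormSq v - (cip u v).im ^ 2) ∧
    (∑ i, hT.eigenvalues i ^ 2) =
      (cnormSq u * cnormSq v + (cip u v).re ^ 2 - (cip u v).im ^ 2) / 2 := by
  classical
  have hcip : cip u v = ∑ i, u i * starRingEnd ℂ (v i) := rfl
  have hcnu : cnormSq u = ∑ i, Complex.normSq (u i) := rfl
  have hcnv : cnormSq v = ∑ i, Complex.normSq (v i) := rfl
  set c : ℂ := cip u v with hc
  set t : ℝ := c.re with ht
  set D : ℝ := cnormSq u * cnormSq v - c.im ^ 2 with hDdef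
  have hcs : Complex.normSq c ≤ cnormSq u * cnormSq v := by
    exact cs_lemma u v
  have hnsq : Complex.normSq c = t ^ 2 + c.im ^ 2 := by
    rw [Complex.normSq_apply, ht]; ring
  have hD0 : 0 ≤ D := by rw [hDdef]; nlinarith [sq_nonneg t]
  set s : ℝ := Real.sqrt D with hsdef
  have hs0 : 0 ≤ s := Real.sqrt_nonneg D
  have hs2 : s ^ 2 = D := Real.sq_sqrt hD0
  have hts : |t| ≤ s := by
    rw [hsdef]
    refine Real.abs_le_sqrt ?_
    nlinarith
  set a : ℝ := (t + s) / 2 with hadef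
  set b : ℝ := (t - s) / 2 with hbdef
  have ha : 0 ≤ a := by
    have := neg_abs_le t; rw [hadef]; linarith
  have hb : b ≤ 0 := by
    have := le_abs_self t; rw [hbdef]; linarith
  -- the polynomial identity
  have hpoly : (symOuter u v).charpoly
      = X ^ (n - 2) * ((X - C ((a : ℂ))) * (X - C ((b : ℂ)))) := by
    apply Polynomial.eq_of_infinite_eval_eq
    apply Set.Infinite.mono (s := {x : ℂ | x ≠ 0})
    · intro x hx
      have hx' : x ≠ 0 := hx
      have h1 := my_eval_charpoly (symOuter u v) x
      have h2 := det_key n hn u v x hx'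
      simp only [Set.mem_setOf_eq, h1, h2, ← hcip, ← hcnu, ← hcnv, ← hc]
      simp only [eval_mul, eval_pow, eval_sub, eval_X, eval_C]
      congr 1
      have hab : a + b = t := by rw [hadef, hbdef]; ring
      have hab2 : a * b = (Complex.normSq c - cnormSq u * cnormSq v) / 4 := by
        rw [hadef, hbdef, hnsq]
        have : s ^ 2 = cnormSq u * cnormSq v - c.im ^ 2 := hs2
        nlinarith [this]
      have : ((t : ℝ) : ℂ) = (a : ℂ) + (b : ℂ) := by rw [← hab]; push_cast; ring
      rw [this]
      have h4 : ((Complex.normSq c : ℝ) : ℂ) - ((cnormSq u : ℝ) : ℂ) * ((cnormSq v : ℝ) : ℂ)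
          = 4 * ((a : ℂ) * (b : ℂ)) := by
        have h5 : Complex.normSq c - cnormSq u * cnormSq v = 4 * (a * b) := by
          rw [hab2]; ring
        calc ((Complex.normSq c : ℝ) : ℂ) - ((cnormSq u : ℝ) : ℂ) * ((cnormSq v : ℝ) : ℂ)
            = ((Complex.normSq c - cnormSq u * cnormSq v : ℝ) : ℂ) := by push_cast; ring
          _ = ((4 * (a * b) : ℝ) : ℂ) := by rw [h5]
          _ = 4 * ((a : ℂ) * (b : ℂ)) := by push_cast; ring
      rw [h4]
      ring
    · have : ({x : ℂ | x ≠ 0}) = ({0}ᶜ : Set ℂ) := by ext x; simp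
      rw [this]
      exact Set.Finite.infinite_compl (Set.finite_singleton 0)
  -- roots
  have hmain : (Finset.univ.val.map hT.eigenvalues)
      = a ::ₘ b ::ₘ Multiset.replicate (n - 2) (0 : ℝ) := by
    apply Multiset.map_injective (f := fun r : ℝ => (r : ℂ)) Complex.ofReal_injective
    have lhs_eq : ((Finset.univ.val.map hT.eigenvalues).map (fun r : ℝ => (r : ℂ)))
        = (symOuter u v).charpoly.roots := by
      rw [charpoly_hermitian _ hT]
      rw [show (∏ i, (X - C ((hT.eigenvalues i : ℂ))))
          = (((Finset.univ.val.map hT.eigenvalues).map (fun r : ℝ => (r : ℂ))).map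
              (fun z : ℂ => X - C z)).prod by
        rw [Multiset.map_map, Multiset.map_map]
        rfl]
      rw [Polynomial.roots_multiset_prod_X_sub_C]
    rw [lhs_eq, hpoly]
    have hne : (X ^ (n - 2) * ((X - C ((a : ℂ))) * (X - C ((b : ℂ))))) ≠ 0 := by
      apply Polynomial.Monic.ne_zero
      exact (Polynomial.monic_X_pow _).mul ((Polynomial.monic_X_sub_C _).mul
        (Polynomial.monic_X_sub_C _))
    have hne1 : ((X : ℂ[X]) ^ (n - 2)) ≠ 0 := (Polynomial.monic_X_pow _).ne_zero
    have hne2 : ((X - C ((a : ℂ))) * (X - C ((b : ℂ)))) ≠ 0 :=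
      ((Polynomial.monic_X_sub_C _).mul (Polynomial.monic_X_sub_C _)).ne_zero
    rw [Polynomial.roots_mul hne, Polynomial.roots_pow, Polynomial.roots_X,
      Polynomial.roots_mul hne2, Polynomial.roots_X_sub_C, Polynomial.roots_X_sub_C]
    simp only [Multiset.map_cons, Multiset.map_replicate, Complex.ofReal_zero,
      Multiset.nsmul_singleton]
    rw [← Multiset.singleton_add, ← Multiset.singleton_add]
    abel
  refine ⟨ha, hb, hmain, ?_, ?_⟩
  · have h1 : ∑ i, |hT.eigenvalues i|
        = ((Finset.univ.val.map hT.eigenvalues).map (fun r : ℝ => |r|)).sum := by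
      rw [Multiset.map_map]; rfl
    rw [h1, hmain]
    simp only [Multiset.map_cons, Multiset.map_replicate, Multiset.sum_cons, abs_zero,
      Multiset.sum_replicate, smul_zero, add_zero, abs_of_nonneg ha, abs_of_nonpos hb]
    rw [hadef, hbdef]; ring
  · have h1 : ∑ i, hT.eigenvalues i ^ 2
        = ((Finset.univ.val.map hT.eigenvalues).map (fun r : ℝ => r ^ 2)).sum := by
      rw [Multiset.map_map]; rfl
    rw [h1, hmain]
    simp only [Multiset.map_cons, Multiset.map_replicate, Multiset.sum_cons,
      Multiset.sum_replicate, smul_zero, add_zero, zero_pow, ne_eq, OfNat.ofNat_ne_zero,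
      not_false_eq_true]
    rw [hadef, hbdef]
    have : s ^ 2 = cnormSq u * cnormSq v - c.im ^ 2 := hs2
    nlinarith [this]
end

section
/- Let n ≥ 2 and x, y ∈ ℂⁿ, and set T = x x* − y y*. Then the multiset of eigenvalues of the Hermitian matrix T consists of a₊ = (‖x‖² − ‖y‖² + √((‖x‖²+‖y‖²)² − 4|⟨x,y⟩|²))/2, a₋ = (‖x‖² − ‖y‖² − √((‖x‖²+‖y‖²)² − 4|⟨x,y⟩|²))/2, and 0 with multiplicity n−2. Consequently the sum of the absolute values of the eigenvalues of T equals √((‖x‖²+‖y‖²)² − 4|⟨x,y⟩|²), and the sum of the squares of the eigenvalues of T (i.e., trace(T²)) equals ‖x‖⁴ + ‖y‖⁴ − 2|⟨x,y⟩|². -/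
open Matrix Finset

section Aux

open Multiset

lemma vmv_mul {n : ℕ} (a b c d : Fin n → ℂ) :
    Matrix.vecMulVec a b * Matrix.vecMulVec c d = (b ⬝ᵥ c) • Matrix.vecMulVec a d := by
  ext i j
  simp only [mul_apply, vecMulVec_apply, Matrix.smul_apply, dotProduct, smul_eq_mul, Finset.sum_mul]
  exact Finset.sum_congr rfl fun k _ => by ring

lemma vmv_mulVec {n : ℕ} (a b v : Fin n → ℂ) :
    (Matrix.vecMulVec a b) *ᵥ v = (b ⬝ᵥ v) • a := by
  ext i
  simp only [mulVec, vecMulVec_apply, dotProduct, Pi.smul_apply, smul_eq_mul]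
  rw [Finset.sum_mul]
  exact Finset.sum_congr rfl fun k _ => by ring

lemma trace_vmv {n : ℕ} (a b : Fin n → ℂ) : (Matrix.vecMulVec a b).trace = b ⬝ᵥ a := by
  simp [trace, vecMulVec_apply, dotProduct, Matrix.diag, mul_comm]

lemma dot_xx {n : ℕ} (x : Fin n → ℂ) : star x ⬝ᵥ x = (cnormSq x : ℂ) := by
  simp [dotProduct, cnormSq, Pi.star_apply, mul_comm, Complex.mul_conj]

lemma dot_yx {n : ℕ} (x y : Fin n → ℂ) : star y ⬝ᵥ x = cip x y := by
  simp [dotProduct, cip, Pi.star_apply, mul_comm]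

lemma dot_xy {n : ℕ} (x y : Fin n → ℂ) : star x ⬝ᵥ y = starRingEnd ℂ (cip x y) := by
  simp [dotProduct, cip, Pi.star_apply, mul_comm]

lemma cnormSq_nonneg {n : ℕ} (x : Fin n → ℂ) : 0 ≤ cnormSq x :=
  Finset.sum_nonneg fun _ _ => Complex.normSq_nonneg _

lemma cauchy_schwarz {n : ℕ} (x y : Fin n → ℂ) :
    ‖cip x y‖ ^ 2 ≤ cnormSq x * cnormSq y := by
  set X : EuclideanSpace ℂ (Fin n) := (WithLp.equiv 2 _).symm x with hX
  set Y : EuclideanSpace ℂ (Fin n) := (WithLp.equiv 2 _).symm y with hY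
  have h1 : cip x y = inner ℂ Y X := by
    rw [PiLp.inner_apply]
    simp [cip, hX, hY, mul_comm]
  have h2 : ‖X‖ ^ 2 = cnormSq x := by
    rw [EuclideanSpace.norm_eq, Real.sq_sqrt (Finset.sum_nonneg fun i _ => sq_nonneg _)]
    simp [cnormSq, Complex.sq_norm]
    exact Finset.sum_congr rfl fun i _ => rfl
  have h3 : ‖Y‖ ^ 2 = cnormSq y := by
    rw [EuclideanSpace.norm_eq, Real.sq_sqrt (Finset.sum_nonneg fun i _ => sq_nonneg _)]
    simp [cnormSq, Complex.sq_norm]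
    exact Finset.sum_congr rfl fun i _ => rfl
  have h5 : ‖cip x y‖ ≤ ‖Y‖ * ‖X‖ := by
    rw [h1]; exact norm_inner_le_norm (𝕜 := ℂ) Y X
  calc ‖cip x y‖ ^ 2 ≤ (‖Y‖ * ‖X‖) ^ 2 := by
        apply pow_le_pow_left₀ (norm_nonneg _) h5
    _ = cnormSq x * cnormSq y := by rw [mul_pow, h2, h3]; ring

/-- the cubic equation satisfied by each eigenvalue -/
lemma eig_cubic {n : ℕ} (x y : Fin n → ℂ)
    (hT : (Matrix.vecMulVec x (star x) - Matrix.vecMulVec y (star y)).IsHermitian) (i : Fin n) :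
    hT.eigenvalues i * (hT.eigenvalues i ^ 2 - (cnormSq x - cnormSq y) * hT.eigenvalues i +
      (‖cip x y‖ ^ 2 - cnormSq x * cnormSq y)) = 0 := by
  set T := Matrix.vecMulVec x (star x) - Matrix.vecMulVec y (star y) with hTdef
  set v : Fin n → ℂ := ⇑(hT.eigenvectorBasis i) with hvdef
  have hv : T *ᵥ v = hT.eigenvalues i • v := hT.mulVec_eigenvectorBasis i
  have hvne : v ≠ 0 := by
    have := hT.eigenvectorBasis.orthonormal.ne_zero i
    intro h
    apply this
    ext j
    exact congrFun h j
  set μ : ℂ := (hT.eigenvalues i : ℂ) with hμ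
  set ξ : ℂ := star x ⬝ᵥ v with hξ
  set η : ℂ := star y ⬝ᵥ v with hη
  set a : ℂ := (cnormSq x : ℂ)
  set b : ℂ := (cnormSq y : ℂ)
  set c : ℂ := cip x y
  have hv' : μ • v = ξ • x - η • y := by
    have hsmul : hT.eigenvalues i • v = μ • v := by
      ext j; simp [hμ, Complex.real_smul]
    rw [← hsmul, ← hv, hTdef, Matrix.sub_mulVec, vmv_mulVec, vmv_mulVec]
  have h1 : μ * ξ = a * ξ - starRingEnd ℂ c * η := by
    have := congrArg (fun w => star x ⬝ᵥ w) hv'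
    simpa [dotProduct_sub, dotProduct_smul, dot_xx, dot_xy, smul_eq_mul, hξ, mul_comm]
      using this
  have h2 : μ * η = c * ξ - b * η := by
    have := congrArg (fun w => star y ⬝ᵥ w) hv'
    simpa [dotProduct_sub, dotProduct_smul, dot_xx, dot_yx, dot_xy, smul_eq_mul, hη, mul_comm]
      using this
  set q : ℂ := μ ^ 2 - (a - b) * μ + (c * starRingEnd ℂ c - a * b) with hq
  have hqξ : q * ξ = 0 := by linear_combination (μ + b) * h1 - starRingEnd ℂ c * h2
  have hqη : q * η = 0 := by linear_combination (μ - a) * h2 + c * h1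
  obtain ⟨j, hj⟩ : ∃ j, v j ≠ 0 := Function.ne_iff.mp hvne
  have hcoord : μ * v j = ξ * x j - η * y j := by
    have := congrFun hv' j
    simpa [smul_eq_mul] using this
  have hkey : μ * q = 0 := by
    have h0 : (μ * q) * v j = 0 := by
      have h6 : q * (μ * v j) = q * ξ * x j - q * η * y j := by rw [hcoord]; ring
      rw [hqξ, hqη] at h6
      simpa [mul_comm, mul_assoc, mul_left_comm] using h6
    exact (mul_eq_zero.mp h0).resolve_right hj
  have hcast : ((hT.eigenvalues i * (hT.eigenvalues i ^ 2 -
      (cnormSq x - cnormSq y) * hT.eigenvalues i +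
      (‖cip x y‖ ^ 2 - cnormSq x * cnormSq y)) : ℝ) : ℂ) = 0 := by
    have hcc : c * starRingEnd ℂ c = ((‖c‖ ^ 2 : ℝ) : ℂ) := by
      rw [Complex.mul_conj]
      norm_cast
      rw [Complex.sq_norm]
    push_cast
    rw [← hkey, hq, hμ]
    push_cast [hcc]
    ring
  exact_mod_cast hcast

lemma spec_trace {n : ℕ} (T : Matrix (Fin n) (Fin n) ℂ) (hT : T.IsHermitian) :
    T.trace = ∑ i, (hT.eigenvalues i : ℂ) ∧
    (T * T).trace = ∑ i, ((hT.eigenvalues i : ℂ)) ^ 2 := by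
  set V : Matrix (Fin n) (Fin n) ℂ := (hT.eigenvectorUnitary : Matrix (Fin n) (Fin n) ℂ) with hV
  set D : Matrix (Fin n) (Fin n) ℂ := diagonal (RCLike.ofReal ∘ hT.eigenvalues) with hD
  have hspec : T = V * D * star V := hT.spectral_theorem
  have hVV : star V * V = 1 := (Matrix.mem_unitaryGroup_iff').mp hT.eigenvectorUnitary.2
  constructor
  · have h1 := congrArg Matrix.trace hspec
    rw [h1, trace_mul_cycle, hVV, one_mul, hD]
    simp [trace_diagonal]
  · have key : (V * D * star V) * (V * D * star V) = V * (D * D) * star V := by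
      calc (V * D * star V) * (V * D * star V)
          = V * D * (star V * V) * (D * star V) := by noncomm_ring
        _ = V * (D * D) * star V := by rw [hVV]; noncomm_ring
    have h2 := congrArg (fun M => (M * M).trace) hspec
    rw [h2, key, trace_mul_cycle, hVV, one_mul, hD, diagonal_mul_diagonal]
    simp [trace_diagonal, sq]

lemma merge0 (p q : ℕ) : Multiset.replicate p (0:ℝ) + Multiset.replicate q 0
    = Multiset.replicate (p + q) 0 := (Multiset.replicate_add p q 0).symm

lemma multiset_pin (M : Multiset ℝ) (u v : ℝ) (hu : 0 ≤ u) (hv : v ≤ 0)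
    (hmem : ∀ z ∈ M, z = u ∨ z = v ∨ z = 0)
    (hsum : M.sum = u + v)
    (hsq : (M.map (fun z => z ^ 2)).sum = u ^ 2 + v ^ 2)
    (hcard : 2 ≤ Multiset.card M) :
    M = u ::ₘ v ::ₘ Multiset.replicate (Multiset.card M - 2) 0 := by
  classical
  set n := Multiset.card M with hn
  set a := (M.filter (· = u)).card with ha
  set N := M.filter (¬ · = u) with hN
  set b := (N.filter (· = v)).card with hb
  set c := (N.filter (¬ · = v)).card with hc
  have hdec : M = replicate a u + (replicate b v + replicate c 0) := by
    have h1 : M.filter (· = u) = replicate a u := by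
      rw [ha, Multiset.eq_replicate_card]; intro z hz; exact (Multiset.mem_filter.mp hz).2
    have h2 : N.filter (· = v) = replicate b v := by
      rw [hb, Multiset.eq_replicate_card]; intro z hz; exact (Multiset.mem_filter.mp hz).2
    have h3 : N.filter (¬ · = v) = replicate c 0 := by
      rw [hc, Multiset.eq_replicate_card]
      intro z hz
      have hz1 := Multiset.mem_filter.mp hz
      have hz2 := Multiset.mem_filter.mp hz1.1
      rcases hmem z hz2.1 with h | h | h
      · exact absurd h hz2.2
      · exact absurd h hz1.2
      · exact h
    have hNdec : N = N.filter (· = v) + N.filter (¬ · = v) :=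
      (Multiset.filter_add_not _ N).symm
    calc M = M.filter (· = u) + N := (Multiset.filter_add_not _ M).symm
      _ = _ := by rw [h1]; nth_rewrite 1 [hNdec]; rw [h2, h3]
  have hn' : a + b + c = n := by
    have := congrArg Multiset.card hdec
    simp only [Multiset.card_add, Multiset.card_replicate] at this
    omega
  have hS : (a : ℝ) * u + (b : ℝ) * v = u + v := by
    rw [hdec] at hsum
    simpa [Multiset.sum_replicate, nsmul_eq_mul] using hsum
  have hQ : (a : ℝ) * u ^ 2 + (b : ℝ) * v ^ 2 = u ^ 2 + v ^ 2 := by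
    rw [hdec] at hsq
    simpa [Multiset.sum_replicate, nsmul_eq_mul] using hsq
  have hrhs : u ::ₘ v ::ₘ Multiset.replicate (n - 2) (0:ℝ)
      = replicate 1 u + (replicate 1 v + replicate (n - 2) 0) := by
    rfl
  rw [hrhs]
  by_cases hu0 : u = 0
  · by_cases hv0 : v = 0
    · subst hu0; subst hv0
      rw [hdec, merge0, merge0, merge0, merge0]
      congr 1
      omega
    · have hb1 : b = 1 := by
        have h : (b : ℝ) * v ^ 2 = v ^ 2 := by
          rw [hu0] at hQ; simpa using hQ
        have h2 : ((b : ℝ) - 1) * v ^ 2 = 0 := by linear_combination h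
        have h3 : (b : ℝ) = 1 := by
          rcases mul_eq_zero.mp h2 with h4 | h4
          · linarith
          · exact absurd h4 (pow_ne_zero _ hv0)
        exact_mod_cast h3
      subst hu0
      rw [hdec, hb1]
      calc replicate a (0:ℝ) + (replicate 1 v + replicate c 0)
          = replicate 1 v + (replicate a (0:ℝ) + replicate c 0) := by abel
        _ = replicate 1 v + replicate (a + c) 0 := by rw [merge0]
        _ = replicate 1 v + (replicate 1 (0:ℝ) + replicate (n - 2) 0) := by
            rw [merge0, show a + c = 1 + (n - 2) by omega]
        _ = replicate 1 (0:ℝ) + (replicate 1 v + replicate (n - 2) 0) := by abel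
  · by_cases hv0 : v = 0
    · have ha1 : a = 1 := by
        have h : (a : ℝ) * u ^ 2 = u ^ 2 := by
          rw [hv0] at hQ; simpa using hQ
        have h2 : ((a : ℝ) - 1) * u ^ 2 = 0 := by linear_combination h
        have h3 : (a : ℝ) = 1 := by
          rcases mul_eq_zero.mp h2 with h4 | h4
          · linarith
          · exact absurd h4 (pow_ne_zero _ hu0)
        exact_mod_cast h3
      subst hv0
      rw [hdec, ha1]
      calc replicate 1 u + (replicate b (0:ℝ) + replicate c 0)
          = replicate 1 u + replicate (b + c) 0 := by rw [merge0]
        _ = replicate 1 u + (replicate 1 (0:ℝ) + replicate (n - 2) 0) := by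
            rw [merge0, show b + c = 1 + (n - 2) by omega]
    · have huv : u - v > 0 := by
        rcases lt_or_eq_of_le hu with h | h
        · linarith [lt_of_le_of_ne hv hv0]
        · exact absurd h.symm hu0
      have hb1 : b = 1 := by
        have h2 : ((b : ℝ) - 1) * (v * (u - v)) = 0 := by linear_combination u * hS - hQ
        have h3 : (b : ℝ) = 1 := by
          rcases mul_eq_zero.mp h2 with h4 | h4
          · linarith
          · rcases mul_eq_zero.mp h4 with h5 | h5
            · exact absurd h5 hv0
            · linarith
        exact_mod_cast h3
      have ha1 : a = 1 := by
        have h2 : ((a : ℝ) - 1) * (u * (u - v)) = 0 := by linear_combination hQ - v * hS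
        have h3 : (a : ℝ) = 1 := by
          rcases mul_eq_zero.mp h2 with h4 | h4
          · linarith
          · rcases mul_eq_zero.mp h4 with h5 | h5
            · exact absurd h5 hu0
            · linarith
        exact_mod_cast h3
      rw [hdec, ha1, hb1, show c = n - 2 by omega]

end Aux

theorem eigenvalues_diff_rankOne (n : ℕ) (hn : 2 ≤ n) (x y : Fin n → ℂ)
    (hT : (Matrix.vecMulVec x (star x) - Matrix.vecMulVec y (star y)).IsHermitian) :
    (Finset.univ.val.map hT.eigenvalues) =
      ((cnormSq x - cnormSq y +
        Real.sqrt ((cnormSq x + cnormSq y) ^ 2 - 4 * ‖cip x y‖ ^ 2)) / 2) ::ₘ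
      ((cnormSq x - cnormSq y -
        Real.sqrt ((cnormSq x + cnormSq y) ^ 2 - 4 * ‖cip x y‖ ^ 2)) / 2) ::ₘ
      Multiset.replicate (n - 2) (0 : ℝ) ∧
    (∑ i, |hT.eigenvalues i|) =
      Real.sqrt ((cnormSq x + cnormSq y) ^ 2 - 4 * ‖cip x y‖ ^ 2) ∧
    (∑ i, hT.eigenvalues i ^ 2) =
      cnormSq x ^ 2 + cnormSq y ^ 2 - 2 * ‖cip x y‖ ^ 2 := by
  set T := Matrix.vecMulVec x (star x) - Matrix.vecMulVec y (star y) with hTdef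
  set α := cnormSq x with hα
  set β := cnormSq y with hβ
  set Q := ‖cip x y‖ ^ 2 with hQdef
  set d := (α + β) ^ 2 - 4 * Q with hd
  set e := Real.sqrt d with he
  set rp := (α - β + e) / 2 with hrp
  set rm := (α - β - e) / 2 with hrm
  have hCS : Q ≤ α * β := cauchy_schwarz x y
  have hQ0 : 0 ≤ Q := sq_nonneg _
  have hα0 : 0 ≤ α := cnormSq_nonneg x
  have hβ0 : 0 ≤ β := cnormSq_nonneg y
  have hd0 : 0 ≤ d := by rw [hd]; nlinarith [sq_nonneg (α - β)]
  have he2 : e ^ 2 = d := Real.sq_sqrt hd0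
  have he0 : 0 ≤ e := Real.sqrt_nonneg _
  have hsle : |α - β| ≤ e := by
    rw [he]
    rw [show |α - β| = Real.sqrt ((α - β) ^ 2) by rw [Real.sqrt_sq_eq_abs]]
    apply Real.sqrt_le_sqrt
    nlinarith
  have hrp0 : 0 ≤ rp := by
    rw [hrp]
    have := abs_le.mp hsle
    linarith [this.1]
  have hrm0 : rm ≤ 0 := by
    rw [hrm]
    have := abs_le.mp hsle
    linarith [this.2]
  -- trace identities
  have htr : T.trace = ((α - β : ℝ) : ℂ) := by
    rw [hTdef, trace_sub, trace_vmv, trace_vmv, dot_xx, dot_xx]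
    push_cast
    ring
  have htr2 : (T * T).trace = ((α ^ 2 + β ^ 2 - 2 * Q : ℝ) : ℂ) := by
    have hexp : T * T = (star x ⬝ᵥ x) • Matrix.vecMulVec x (star x)
        - (star x ⬝ᵥ y) • Matrix.vecMulVec x (star y)
        - ((star y ⬝ᵥ x) • Matrix.vecMulVec y (star x)
        - (star y ⬝ᵥ y) • Matrix.vecMulVec y (star y)) := by
      rw [hTdef, sub_mul, mul_sub, mul_sub, vmv_mul, vmv_mul, vmv_mul, vmv_mul]
    rw [hexp]
    simp only [trace_sub, trace_smul, trace_vmv, dot_xx, dot_xy, dot_yx, smul_eq_mul]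
    have hconj : starRingEnd ℂ (cip y x) = cip x y := by
      simp [cip, map_sum, mul_comm]
    rw [hconj]
    have hcc : starRingEnd ℂ (cip x y) * cip x y = ((Q : ℝ) : ℂ) := by
      rw [mul_comm, Complex.mul_conj, hQdef]
      norm_cast
      rw [Complex.sq_norm]
    rw [hcc, mul_comm (cip x y) (starRingEnd ℂ (cip x y)), hcc]
    push_cast
    ring
  obtain ⟨hspec1, hspec2⟩ := spec_trace T hT
  have hsum : (∑ i, hT.eigenvalues i) = α - β := by
    have : ((∑ i, hT.eigenvalues i : ℝ) : ℂ) = ((α - β : ℝ) : ℂ) := by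
      push_cast
      rw [← hspec1, htr]
      push_cast
      ring
    exact_mod_cast this
  have hsumsq : (∑ i, hT.eigenvalues i ^ 2) = α ^ 2 + β ^ 2 - 2 * Q := by
    have : ((∑ i, hT.eigenvalues i ^ 2 : ℝ) : ℂ) = ((α ^ 2 + β ^ 2 - 2 * Q : ℝ) : ℂ) := by
      push_cast
      rw [← hspec2, htr2]
      push_cast
      ring
    exact_mod_cast this
  -- the multiset
  set M := Finset.univ.val.map hT.eigenvalues with hM
  have hcardM : Multiset.card M = n := by
    rw [hM, Multiset.card_map]
    simp
  have hmem : ∀ z ∈ M, z = rp ∨ z = rm ∨ z = 0 := by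
    intro z hz
    obtain ⟨i, _, rfl⟩ := Multiset.mem_map.mp hz
    have hcub := eig_cubic x y hT i
    set t := hT.eigenvalues i with ht
    have hfac : t ^ 2 - (α - β) * t + (Q - α * β) = (t - rp) * (t - rm) := by
      rw [hrp, hrm]
      have : (t - (α - β + e) / 2) * (t - (α - β - e) / 2)
          = t ^ 2 - (α - β) * t + ((α - β) ^ 2 - e ^ 2) / 4 := by ring
      rw [this, he2, hd]
      ring
    rw [hfac] at hcub
    rcases mul_eq_zero.mp hcub with h | h
    · right; right; exact h
    · rcases mul_eq_zero.mp h with h | h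
      · left; linarith [sub_eq_zero.mp h]
      · right; left; linarith [sub_eq_zero.mp h]
  have hsumM : M.sum = rp + rm := by
    rw [hM]
    have : (Finset.univ.val.map hT.eigenvalues).sum = ∑ i, hT.eigenvalues i := rfl
    rw [this, hsum, hrp, hrm]
    ring
  have hsqM : (M.map (fun z => z ^ 2)).sum = rp ^ 2 + rm ^ 2 := by
    rw [hM, Multiset.map_map]
    have : (Finset.univ.val.map ((fun z => z ^ 2) ∘ hT.eigenvalues)).sum
        = ∑ i, hT.eigenvalues i ^ 2 := rfl
    rw [this, hsumsq, hrp, hrm]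
    have : ((α - β + e) / 2) ^ 2 + ((α - β - e) / 2) ^ 2
        = ((α - β) ^ 2 + e ^ 2) / 2 := by ring
    rw [this, he2, hd]
    ring
  have hcard2 : 2 ≤ Multiset.card M := by rw [hcardM]; exact hn
  have hpin := multiset_pin M rp rm hrp0 hrm0 hmem hsumM hsqM hcard2
  rw [hcardM] at hpin
  refine ⟨hpin, ?_, ?_⟩
  · -- sum of absolute values
    have h1 : (∑ i, |hT.eigenvalues i|) = (M.map (fun z => |z|)).sum := by
      rw [hM, Multiset.map_map]
      rfl
    rw [h1, hpin]
    simp only [Multiset.map_cons, Multiset.sum_cons, Multiset.map_replicate, abs_zero,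
      Multiset.sum_replicate, smul_zero, add_zero]
    rw [abs_of_nonneg hrp0, abs_of_nonpos hrm0, hrp, hrm]
    ring
  · exact hsumsq
end

section
/- Let V be an ℝ-linear subspace of ℂⁿ (ℂⁿ viewed as a real vector space) and let f₁, …, f_m ∈ ℂⁿ. Then the following are equivalent: (1) for all x, y ∈ V, |⟨x,f_k⟩| = |⟨y,f_k⟩| for all k = 1,…,m implies x = c y for some c ∈ ℂ with |c| = 1; (2) there do not exist u, v ∈ V with ⊙(u,v) = (u v* + v u*)/2 ≠ 0 such that Re(⟨u,f_k⟩ · conj(⟨v,f_k⟩)) = 0 for all k = 1,…,m. -/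
open Matrix Finset

lemma cip_add {n : ℕ} (x y f : Fin n → ℂ) : cip (x + y) f = cip x f + cip y f := by
  simp [cip, add_mul, Finset.sum_add_distrib]

lemma cip_sub {n : ℕ} (x y f : Fin n → ℂ) : cip (x - y) f = cip x f - cip y f := by
  simp [cip, sub_mul, Finset.sum_sub_distrib]

lemma abs_eq_of_re {A B : ℂ} (h : (A * starRingEnd ℂ B).re = 0) :
    ‖A + B‖ = ‖A - B‖ := by
  rw [Complex.norm_def, Complex.norm_def]
  congr 1
  simp only [Complex.mul_re, Complex.conj_re, Complex.conj_im] at h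
  simp only [Complex.normSq_apply, Complex.add_re, Complex.add_im, Complex.sub_re,
    Complex.sub_im]
  linear_combination 4 * h

lemma re_eq_zero_of_abs {a b : ℂ} (h : ‖a‖ = ‖b‖) :
    ((a + b) * starRingEnd ℂ (a - b)).re = 0 := by
  have h2 : Complex.normSq a = Complex.normSq b := by
    rw [← Complex.sq_norm, ← Complex.sq_norm, h]
  simp only [Complex.normSq_apply] at h2
  simp only [Complex.mul_re, Complex.conj_re, Complex.conj_im, Complex.add_re,
    Complex.add_im, Complex.sub_re, Complex.sub_im]
  linear_combination h2

lemma symOuter_eq_zero_cases {n : ℕ} {u v : Fin n → ℂ} (h : symOuter u v = 0) :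
    u = 0 ∨ ∃ t : ℝ, v = ((t : ℂ) * Complex.I) • u := by
  by_cases hu : u = 0
  · exact Or.inl hu
  right
  obtain ⟨i₀, hi₀⟩ : ∃ i, u i ≠ 0 := by
    by_contra h'; push_neg at h'; exact hu (funext h')
  have key : ∀ i j, u i * starRingEnd ℂ (v j) + v i * starRingEnd ℂ (u j) = 0 := by
    intro i j
    have h2 := congrFun (congrFun h i) j
    simp only [symOuter, Matrix.smul_apply, Matrix.add_apply, Matrix.vecMulVec_apply,
      Pi.star_apply, Complex.star_def, Matrix.zero_apply, smul_eq_mul] at h2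
    field_simp at h2
    linear_combination h2
  have hcu : starRingEnd ℂ (u i₀) ≠ 0 := by simpa using hi₀
  set l : ℂ := -(starRingEnd ℂ (v i₀)) / starRingEnd ℂ (u i₀) with hl
  have hv : ∀ i, v i = l * u i := by
    intro i
    have hk := key i i₀
    rw [hl]
    field_simp
    linear_combination hk
  have hre : l.re = 0 := by
    have hk := key i₀ i₀
    rw [hv i₀] at hk
    have huu : u i₀ * starRingEnd ℂ (u i₀) ≠ 0 := mul_ne_zero hi₀ hcu
    have hprod : (l + starRingEnd ℂ l) * (u i₀ * starRingEnd ℂ (u i₀)) = 0 := by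
      rw [_root_.map_mul] at hk
      linear_combination hk
    have h3 : l + starRingEnd ℂ l = 0 := by
      rcases mul_eq_zero.mp hprod with h' | h'
      · exact h'
      · exact absurd h' huu
    have h4 := congrArg Complex.re h3
    simp only [Complex.add_re, Complex.conj_re, Complex.zero_re] at h4
    linarith
  refine ⟨l.im, funext fun i => ?_⟩
  rw [hv i]
  simp only [Pi.smul_apply, smul_eq_mul]
  congr 1
  apply Complex.ext <;> simp [hre]

lemma symOuter_smul_smul {n : ℕ} {a b : ℂ} (w : Fin n → ℂ)
    (hab : a * starRingEnd ℂ b + b * starRingEnd ℂ a = 0) :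
    symOuter (a • w) (b • w) = 0 := by
  ext i j
  simp only [symOuter, Matrix.smul_apply, Matrix.add_apply, Matrix.vecMulVec_apply,
    Pi.star_apply, Pi.smul_apply, Complex.star_def, Matrix.zero_apply, smul_eq_mul, _root_.map_mul]
  linear_combination (2⁻¹ * w i * starRingEnd ℂ (w j)) * hab

theorem phaseRetrievable_iff_no_real_orthogonal_pair {n m : ℕ}
    (V : Submodule ℝ (Fin n → ℂ)) (f : Fin m → (Fin n → ℂ)) :
    (∀ x ∈ V, ∀ y ∈ V,
        (∀ k, ‖cip x (f k)‖ = ‖cip y (f k)‖) →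
        ∃ c : ℂ, ‖c‖ = 1 ∧ x = c • y) ↔
    ¬ ∃ u ∈ V, ∃ v ∈ V, symOuter u v ≠ 0 ∧
        ∀ k, (cip u (f k) * starRingEnd ℂ (cip v (f k))).re = 0 := by
  constructor
  · intro h
    rintro ⟨u, hu, v, hv, hne, hre⟩
    have hx : u + v ∈ V := V.add_mem hu hv
    have hy : u - v ∈ V := V.sub_mem hu hv
    have habs : ∀ k, ‖cip (u + v) (f k)‖ = ‖cip (u - v) (f k)‖ := by
      intro k
      rw [cip_add, cip_sub]
      exact abs_eq_of_re (hre k)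
    obtain ⟨c, hc1, hxy⟩ := h (u + v) hx (u - v) hy habs
    set w : Fin n → ℂ := u - v with hw
    have hcc : c * starRingEnd ℂ c = 1 := by
      rw [Complex.mul_conj, Complex.normSq_eq_norm_sq, hc1]; norm_num
    have h2u : u = ((c + 1) / 2) • w := by
      have h1 : (2 : ℂ) • u = c • w + w := by
        calc (2 : ℂ) • u = (u + v) + (u - v) := by module
        _ = c • w + w := by rw [hxy]
      have h2 : ((2 : ℂ)⁻¹) • ((2 : ℂ) • u) = ((2 : ℂ)⁻¹) • (c • w + w) := by rw [h1]
      rw [smul_smul, inv_mul_cancel₀ (two_ne_zero), one_smul] at h2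
      rw [h2]; module
    have h2v : v = ((c - 1) / 2) • w := by
      have hvw : v = u - w := by rw [hw]; module
      rw [hvw, h2u]; module
    apply hne
    rw [h2u, h2v]
    apply symOuter_smul_smul
    simp only [map_div₀, _root_.map_sub, _root_.map_add, _root_.map_one, _root_.map_ofNat]
    field_simp
    linear_combination 2 * hcc
  · intro h x hx y hy habs
    have hu : x + y ∈ V := V.add_mem hx hy
    have hv : x - y ∈ V := V.sub_mem hx hy
    have hre : ∀ k, (cip (x + y) (f k) * starRingEnd ℂ (cip (x - y) (f k))).re = 0 := by
      intro k
      rw [cip_add, cip_sub]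
      exact re_eq_zero_of_abs (habs k)
    have h0 : symOuter (x + y) (x - y) = 0 := by
      by_contra hne
      exact h ⟨x + y, hu, x - y, hv, hne, hre⟩
    rcases symOuter_eq_zero_cases h0 with h1 | ⟨t, ht⟩
    · refine ⟨-1, by simp, ?_⟩
      have hxy : x = -y := eq_neg_of_add_eq_zero_left h1
      rw [hxy]; module
    · set d : ℂ := (t : ℂ) * Complex.I with hd
      have hdre : d.re = 0 := by simp [hd]
      have hdne : (1 : ℂ) - d ≠ 0 := by
        intro hcon
        have hcon' := congrArg Complex.re hcon
        simp [Complex.sub_re, hdre] at hcon'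
      have h1 : ((1 : ℂ) - d) • x = ((1 : ℂ) + d) • y := by
        have ht' : x - y = d • (x + y) := ht
        have hdiff : ((1 : ℂ) - d) • x - ((1 : ℂ) + d) • y = (x - y) - d • (x + y) := by
          module
        rw [ht', sub_self] at hdiff
        exact sub_eq_zero.mp hdiff
      have habsd : ‖1 + d‖ = ‖1 - d‖ := by
        rw [Complex.norm_def, Complex.norm_def]
        congr 1
        simp [Complex.normSq_apply, Complex.add_re, Complex.add_im, Complex.sub_re,
          Complex.sub_im, hdre]
      refine ⟨(1 + d) / (1 - d), ?_, ?_⟩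
      · rw [norm_div, habsd, div_self]
        exact norm_ne_zero_iff.mpr hdne
      · have hxx : x = ((1 : ℂ) - d)⁻¹ • (((1 : ℂ) - d) • x) := by
          rw [smul_smul, inv_mul_cancel₀ hdne, one_smul]
        rw [hxx, h1, smul_smul, div_eq_inv_mul]
end

section
/- Let f₁, …, f_m ∈ ℝⁿ span ℝⁿ. Then the following are equivalent: (1) for all x, y ∈ ℝⁿ, |⟨x,f_k⟩| = |⟨y,f_k⟩| for all k implies x = y or x = −y (phase retrievability); (2) for every x ∈ ℝⁿ with x ≠ 0, the matrix R(x) = Σ_{k=1}^m ⟨x,f_k⟩² f_k f_kᵀ is invertible; (3) there do not exist u, v ∈ ℝⁿ with u ≠ 0 and v ≠ 0 such that ⟨u,f_k⟩·⟨v,f_k⟩ = 0 for all k = 1,…,m; (4) for every subset I ⊆ {1,…,m}, either {f_k : k ∈ I} spans ℝⁿ or {f_k : k ∉ I} spans ℝⁿ. -/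
open Matrix Finset

noncomputable def rip {n : ℕ} (x y : Fin n → ℝ) : ℝ := ∑ i, x i * y i

noncomputable def Rmat {n m : ℕ} (f : Fin m → (Fin n → ℝ)) (x : Fin n → ℝ) :
    Matrix (Fin n) (Fin n) ℝ :=
  ∑ k, (rip x (f k)) ^ 2 • Matrix.vecMulVec (f k) (f k)

lemma rip_eq_dot {n : ℕ} (x y : Fin n → ℝ) : rip x y = x ⬝ᵥ y := rfl

lemma rip_comm {n : ℕ} (x y : Fin n → ℝ) : rip x y = rip y x := by
  simp [rip, mul_comm]

lemma exists_orth {n : ℕ} (S : Set (Fin n → ℝ)) (h : Submodule.span ℝ S ≠ ⊤) :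
    ∃ u : Fin n → ℝ, u ≠ 0 ∧ ∀ s ∈ S, rip u s = 0 := by
  set E := EuclideanSpace ℝ (Fin n)
  let Se : Set E := (WithLp.linearEquiv 2 ℝ (Fin n → ℝ)).symm.toLinearMap '' S
  let p : Submodule ℝ E := Submodule.span ℝ Se
  have h' : p ≠ ⊤ := by
    intro hp; apply h; rw [eq_top_iff]; intro x _
    have hx : WithLp.toLp 2 x ∈ p := hp ▸ Submodule.mem_top
    simp only [p, Se, Submodule.span_image] at hx
    obtain ⟨y, hy, hyx⟩ := Submodule.mem_map.mp hx
    have : y = x := by simpa using congrArg WithLp.ofLp hyx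
    exact this ▸ hy
  have h2 : pᗮ ≠ ⊥ := fun hb => h' (Submodule.orthogonal_eq_bot_iff.mp hb)
  obtain ⟨u, hu, hune⟩ := Submodule.exists_mem_ne_zero_of_ne_bot h2
  refine ⟨u.ofLp, fun h0 => hune (by ext i; simpa using congrFun h0 i), fun s hs => ?_⟩
  have h3 : (inner ℝ (WithLp.toLp 2 s : E) u : ℝ) = 0 :=
    hu _ (Submodule.subset_span ⟨s, hs, rfl⟩)
  rw [PiLp.inner_apply] at h3
  simpa [rip, RCLike.inner_apply, mul_comm] using h3

lemma eq_zero_of_orth_span {n : ℕ} (S : Set (Fin n → ℝ)) (h : Submodule.span ℝ S = ⊤)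
    (u : Fin n → ℝ) (hu : ∀ s ∈ S, rip u s = 0) : u = 0 := by
  have key : ∀ w, w ∈ Submodule.span ℝ S → rip u w = 0 := by
    intro w hw
    induction hw using Submodule.span_induction with
    | mem s hs => exact hu s hs
    | zero => simp [rip]
    | add a b _ _ ha hb =>
        rw [show rip u (a + b) = rip u a + rip u b by
          simp [rip, mul_add, Finset.sum_add_distrib], ha, hb, add_zero]
    | smul c a _ ha =>
        rw [show rip u (c • a) = c * rip u a from by
          simp [rip, Finset.mul_sum, mul_left_comm], ha, mul_zero]
  have key2 : rip u u = 0 := key u (h ▸ Submodule.mem_top)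
  rw [rip_eq_dot] at key2
  exact dotProduct_self_eq_zero.mp key2

lemma rip_sum_smul {n : ℕ} {ι : Type*} (s : Finset ι) (y : Fin n → ℝ) (a : ι → ℝ)
    (v : ι → Fin n → ℝ) :
    rip y (∑ k ∈ s, a k • v k) = ∑ k ∈ s, a k * rip y (v k) := by
  simp only [rip, Finset.sum_apply, Pi.smul_apply, smul_eq_mul, Finset.mul_sum]
  rw [Finset.sum_comm]
  exact Finset.sum_congr rfl fun k _ => Finset.sum_congr rfl fun i _ => by ring

lemma Rmat_mulVec {n m : ℕ} (f : Fin m → (Fin n → ℝ)) (x y : Fin n → ℝ) :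
    Rmat f x *ᵥ y = ∑ k, ((rip x (f k)) ^ 2 * rip (f k) y) • f k := by
  ext i
  simp only [Rmat, Matrix.mulVec, dotProduct, Matrix.sum_apply, Matrix.smul_apply,
    Matrix.vecMulVec_apply, smul_eq_mul, Finset.sum_apply, Pi.smul_apply, rip,
    Finset.sum_mul, Finset.mul_sum]
  rw [Finset.sum_comm]
  exact Finset.sum_congr rfl fun k _ => Finset.sum_congr rfl fun j _ => by ring

lemma rip_Rmat {n m : ℕ} (f : Fin m → (Fin n → ℝ)) (x y : Fin n → ℝ) :
    rip y (Rmat f x *ᵥ y) = ∑ k, (rip x (f k)) ^ 2 * (rip y (f k)) ^ 2 := by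
  rw [Rmat_mulVec, rip_sum_smul]
  exact Finset.sum_congr rfl fun k _ => by rw [rip_comm (f k) y]; ring

theorem real_phase_retrieval_tfae {n m : ℕ} (f : Fin m → (Fin n → ℝ))
    (hspan : Submodule.span ℝ (Set.range f) = ⊤) :
    [ -- (1) phase retrievability
      (∀ x y : Fin n → ℝ,
        (∀ k, |rip x (f k)| = |rip y (f k)|) → x = y ∨ x = -y),
      -- (2) R(x) invertible for all x ≠ 0
      (∀ x : Fin n → ℝ, x ≠ 0 → IsUnit (Rmat f x)),
      -- (3) no nonzero pair u, v with ⟨u,f_k⟩⟨v,f_k⟩ = 0 for all k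
      (¬ ∃ u v : Fin n → ℝ, u ≠ 0 ∧ v ≠ 0 ∧ ∀ k, rip u (f k) * rip v (f k) = 0),
      -- (4) complementary-span property
      (∀ I : Set (Fin m),
        Submodule.span ℝ (f '' I) = ⊤ ∨ Submodule.span ℝ (f '' Iᶜ) = ⊤) ].TFAE := by
  have hadd : ∀ (a b w : Fin n → ℝ), rip (a + b) w = rip a w + rip b w := fun a b w => by
    simp [rip_eq_dot, add_dotProduct]
  have hsub : ∀ (a b w : Fin n → ℝ), rip (a - b) w = rip a w - rip b w := fun a b w => by
    simp [rip_eq_dot, sub_dotProduct]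
  tfae_have 1 → 3 := by
    intro h1
    rintro ⟨u, v, hu, hv, hprod⟩
    have habs : ∀ k, |rip (u + v) (f k)| = |rip (u - v) (f k)| := by
      intro k
      rw [hadd, hsub]
      rcases mul_eq_zero.mp (hprod k) with h | h <;> rw [h] <;> simp [abs_eq_abs]
    rcases h1 _ _ habs with h | h
    · refine hv (funext fun i => ?_)
      have := congrFun h i
      simp only [Pi.add_apply, Pi.sub_apply] at this
      simpa using by linarith
    · refine hu (funext fun i => ?_)
      have := congrFun h i
      simp only [Pi.add_apply, Pi.neg_apply, Pi.sub_apply] at this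
      simpa using by linarith
  tfae_have 3 → 1 := by
    intro h3 x y habs
    by_contra hcon
    push_neg at hcon
    refine h3 ⟨x - y, x + y, sub_ne_zero.mpr hcon.1, ?_, fun k => ?_⟩
    · intro h
      refine hcon.2 (funext fun i => ?_)
      have := congrFun h i
      simp only [Pi.add_apply, Pi.zero_apply] at this
      simp only [Pi.neg_apply]
      linarith
    · have hpq : (rip x (f k)) ^ 2 = (rip y (f k)) ^ 2 := by
        rw [← sq_abs, ← sq_abs (rip y (f k)), habs k]
      rw [hsub, hadd]
      nlinarith [hpq]
  tfae_have 3 → 2 := by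
    intro h3 x hx
    by_contra hns
    have hdet : (Rmat f x).det = 0 := by
      by_contra hd
      exact hns ((Matrix.isUnit_iff_isUnit_det _).mpr (isUnit_iff_ne_zero.mpr hd))
    obtain ⟨v, hv, hmv⟩ := (Matrix.exists_mulVec_eq_zero_iff).mpr hdet
    have hq : ∑ k, (rip x (f k)) ^ 2 * (rip v (f k)) ^ 2 = 0 := by
      rw [← rip_Rmat, hmv]; simp [rip]
    have hterm : ∀ k ∈ Finset.univ, (rip x (f k)) ^ 2 * (rip v (f k)) ^ 2 = 0 := by
      refine (Finset.sum_eq_zero_iff_of_nonneg fun k _ => by positivity).mp hq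
    refine h3 ⟨x, v, hx, hv, fun k => ?_⟩
    have := hterm k (Finset.mem_univ k)
    have h2 : (rip x (f k) * rip v (f k)) ^ 2 = 0 := by ring_nf; ring_nf at this; linarith
    exact pow_eq_zero_iff (by norm_num) |>.mp h2
  tfae_have 2 → 3 := by
    intro h2
    rintro ⟨u, v, hu, hv, hprod⟩
    have hmv : Rmat f u *ᵥ v = 0 := by
      rw [Rmat_mulVec]
      refine Finset.sum_eq_zero fun k _ => ?_
      have : (rip u (f k)) ^ 2 * rip (f k) v = 0 := by
        rw [rip_comm (f k) v, pow_two, mul_assoc, hprod k, mul_zero]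
      rw [this, zero_smul]
    have hdet : (Rmat f u).det = 0 := Matrix.exists_mulVec_eq_zero_iff.mp ⟨v, hv, hmv⟩
    have := (Matrix.isUnit_iff_isUnit_det _).mp (h2 u hu)
    rw [isUnit_iff_ne_zero] at this
    exact this hdet
  tfae_have 3 → 4 := by
    intro h3 I
    by_contra hcon
    push_neg at hcon
    obtain ⟨u, hu, hup⟩ := exists_orth _ hcon.1
    obtain ⟨v, hv, hvp⟩ := exists_orth _ hcon.2
    refine h3 ⟨u, v, hu, hv, fun k => ?_⟩
    by_cases hk : k ∈ I
    · rw [hup (f k) (Set.mem_image_of_mem f hk), zero_mul]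
    · rw [hvp (f k) (Set.mem_image_of_mem f hk), mul_zero]
  tfae_have 4 → 3 := by
    intro h4
    rintro ⟨u, v, hu, hv, hprod⟩
    set I : Set (Fin m) := {k | rip v (f k) ≠ 0} with hI
    rcases h4 I with h | h
    · refine hu (eq_zero_of_orth_span _ h u ?_)
      rintro s ⟨k, hk, rfl⟩
      have := hprod k
      have hvk : rip v (f k) ≠ 0 := hk
      rcases mul_eq_zero.mp this with h' | h'
      · exact h'
      · exact absurd h' hvk
    · refine hv (eq_zero_of_orth_span _ h v ?_)
      rintro s ⟨k, hk, rfl⟩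
      have hk' : ¬ rip v (f k) ≠ 0 := hk
      push_neg at hk'
      exact (rip_comm v (f k)) ▸ hk'
  tfae_finish
end

section
/- Let f₁, …, f_m ∈ ℝⁿ be such that for all x, y ∈ ℝⁿ, |⟨x,f_k⟩| = |⟨y,f_k⟩| for all k implies x = y or x = −y (i.e., the family is phase retrievable for ℝⁿ). Then m ≥ 2n − 1. -/
open Finset

/-- `rip · v` as a linear map. -/
noncomputable def ripL {n : ℕ} (v : Fin n → ℝ) : (Fin n → ℝ) →ₗ[ℝ] ℝ where
  toFun x := rip x v
  map_add' x y := by simp [rip, add_mul, Finset.sum_add_distrib]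
  map_smul' c x := by simp [rip, Finset.mul_sum, mul_assoc]

lemma rip_add {n : ℕ} (x y v : Fin n → ℝ) : rip (x + y) v = rip x v + rip y v := by
  simp [rip, add_mul, Finset.sum_add_distrib]

lemma rip_sub {n : ℕ} (x y v : Fin n → ℝ) : rip (x - y) v = rip x v - rip y v := by
  simp [rip, sub_mul, Finset.sum_sub_distrib]

lemma exists_ortho {n m : ℕ} (g : Fin m → (Fin n → ℝ)) (S : Finset (Fin m))
    (h : S.card < n) : ∃ u : Fin n → ℝ, u ≠ 0 ∧ ∀ k ∈ S, rip u (g k) = 0 := by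
  classical
  let L : (Fin n → ℝ) →ₗ[ℝ] (↥S → ℝ) :=
    LinearMap.pi (fun k : S => ripL (g k))
  have hnotinj : ¬ Function.Injective L := by
    intro hinj
    have := LinearMap.finrank_le_finrank_of_injective hinj
    simp [Module.finrank_pi, Fintype.card_coe] at this
    omega
  rw [← LinearMap.ker_eq_bot] at hnotinj
  obtain ⟨u, hu, hune⟩ := Submodule.exists_mem_ne_zero_of_ne_bot hnotinj
  refine ⟨u, hune, fun k hk => ?_⟩
  have : L u = 0 := hu
  have := congrFun this ⟨k, hk⟩
  simp [L, LinearMap.pi_apply, ripL] at this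
  exact this

theorem real_phase_retrieval_card_lower_bound {n m : ℕ} (f : Fin m → (Fin n → ℝ))
    (hPR : ∀ x y : Fin n → ℝ,
      (∀ k, |rip x (f k)| = |rip y (f k)|) → x = y ∨ x = -y) :
    2 * n - 1 ≤ m := by
  classical
  by_contra hm
  push_neg at hm
  -- so m < 2n - 1, in particular n ≥ 1 and m ≤ 2n - 2
  set S : Finset (Fin m) := Finset.univ.filter (fun k => (k : ℕ) < n - 1) with hS
  have hcS : S.card ≤ n - 1 := by
    have h := Finset.card_le_card_of_injOn (s := S) (t := Finset.range (n - 1))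
      (fun k : Fin m => (k : ℕ))
      (fun k hk => Finset.mem_range.2 (by
        have : (k : ℕ) < n - 1 := (Finset.mem_filter.1 hk).2
        exact this))
      (fun a _ b _ hab => Fin.val_injective hab)
    simpa using h
  have hcC : Sᶜ.card ≤ m - (n - 1) := by
    have h := Finset.card_le_card_of_injOn (s := Sᶜ) (t := Finset.range (m - (n - 1)))
      (fun k : Fin m => (k : ℕ) - (n - 1))
      (fun k hk => Finset.mem_range.2 (by
        have hk' : ¬ ((k : ℕ) < n - 1) := by
          have h2 := Finset.mem_compl.1 hk
          simp only [hS, Finset.mem_filter, Finset.mem_univ, true_and] at h2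
          exact h2
        have := k.isLt
        show (k : ℕ) - (n - 1) < m - (n - 1)
        omega))
      (fun a ha b hb hab => by
        have ha' : ¬ ((a : ℕ) < n - 1) := by
          have h2 := Finset.mem_compl.1 ha
          simp only [hS, Finset.mem_filter, Finset.mem_univ, true_and] at h2
          exact h2
        have hb' : ¬ ((b : ℕ) < n - 1) := by
          have h2 := Finset.mem_compl.1 hb
          simp only [hS, Finset.mem_filter, Finset.mem_univ, true_and] at h2
          exact h2
        simp only at hab
        exact Fin.val_injective (by omega))
    simpa using h
  have hScard : Fintype.card (Fin m) = m := Fintype.card_fin m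
  have hcompl : Sᶜ.card = m - S.card := by
    rw [Finset.card_compl, hScard]
  have hn1 : 1 ≤ n := by omega
  have hSlt : S.card < n := by omega
  have hClt : Sᶜ.card < n := by omega
  obtain ⟨u, hu0, hu⟩ := exists_ortho f S hSlt
  obtain ⟨v, hv0, hv⟩ := exists_ortho f Sᶜ hClt
  have hkey : ∀ k, |rip (u + v) (f k)| = |rip (u - v) (f k)| := by
    intro k
    by_cases hk : k ∈ S
    · rw [rip_add, rip_sub, hu k hk]
      simp [abs_neg]
    · rw [rip_add, rip_sub, hv k (Finset.mem_compl.2 hk)]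
      simp
  rcases hPR _ _ hkey with h | h
  · apply hv0
    have : (2 : ℝ) • v = 0 := by
      have := sub_eq_zero.2 h
      simpa [two_smul, sub_sub_cancel_left] using (by linear_combination (norm := abel) this :
        (u + v) - (u - v) = 0)
    simpa using (smul_eq_zero.1 this).resolve_left (by norm_num)
  · apply hu0
    have h2 : u + v = -u + v := by
      rw [h]; abel
    have : (2 : ℝ) • u = 0 := by
      have := sub_eq_zero.2 h2
      simpa [two_smul] using (by linear_combination (norm := abel) this :
        (u + v) - (-u + v) = 0)
    simpa using (smul_eq_zero.1 this).resolve_left (by norm_num)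
end

section
/- Let f₁, …, f_m ∈ ℝⁿ with m = 2n − 1. Then the family is phase retrievable for ℝⁿ (i.e., for all x, y ∈ ℝⁿ, |⟨x,f_k⟩| = |⟨y,f_k⟩| for all k implies x = y or x = −y) if and only if the family is full spark, i.e., every subset of n of the vectors f₁,…,f_m is linearly independent. -/
open Finset

lemma rip_eq_inner {n : ℕ} (x y : Fin n → ℝ) :
    rip x y = (inner ℝ ((WithLp.equiv 2 _).symm x) ((WithLp.equiv 2 _).symm y)
      : ℝ) := by
  simp [rip, PiLp.inner_apply, RCLike.inner_apply, mul_comm]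

lemma aux_orth_exists {n : ℕ} (K : Submodule ℝ (EuclideanSpace ℝ (Fin n))) (hK : K ≠ ⊤) :
    ∃ u : EuclideanSpace ℝ (Fin n), u ≠ 0 ∧ ∀ w ∈ K, (inner ℝ w u : ℝ) = 0 := by
  have h : Kᗮ ≠ ⊥ := fun h => hK (Submodule.orthogonal_eq_bot_iff.mp h)
  obtain ⟨u, huK, hu⟩ := Submodule.ne_bot_iff _ |>.mp h
  exact ⟨u, hu, fun w hw => (Submodule.mem_orthogonal K u).mp huK w hw⟩

lemma aux_zero {n m : ℕ} (f : Fin m → EuclideanSpace ℝ (Fin n))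
    (hfs : ∀ s : Finset (Fin m), s.card = n → LinearIndependent ℝ (fun k : s => f k))
    (T : Finset (Fin m)) (hT : n ≤ T.card) (z : EuclideanSpace ℝ (Fin n))
    (hz : ∀ k ∈ T, (inner ℝ (f k) z : ℝ) = 0) : z = 0 := by
  obtain ⟨t, hts, htc⟩ := Finset.exists_subset_card_eq hT
  have hli := hfs t htc
  have hspan : Submodule.span ℝ (Set.range (fun k : t => f k)) = ⊤ := by
    apply hli.span_eq_top_of_card_eq_finrank'
    simp [htc, finrank_euclideanSpace_fin]
  have hmem : z ∈ Submodule.span ℝ (Set.range (fun k : t => f k)) := by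
    rw [hspan]; trivial
  have hz2 : (inner ℝ z z : ℝ) = 0 := by
    refine Submodule.span_induction (p := fun w _ => (inner ℝ w z : ℝ) = 0) ?_ ?_ ?_ ?_ hmem
    · rintro w ⟨k, rfl⟩
      exact hz k (hts k.2)
    · simp
    · intro a b _ _ ha hb
      rw [inner_add_left, ha, hb, add_zero]
    · intro c a _ ha
      rw [real_inner_smul_left, ha, mul_zero]
  exact inner_self_eq_zero.mp hz2

theorem real_phase_retrieval_iff_full_spark {n m : ℕ} (f : Fin m → (Fin n → ℝ))
    (hm : m = 2 * n - 1) :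
    (∀ x y : Fin n → ℝ,
      (∀ k, |rip x (f k)| = |rip y (f k)|) → x = y ∨ x = -y) ↔
    (∀ s : Finset (Fin m), s.card = n →
      LinearIndependent ℝ (fun k : s => f k)) := by
  set g : Fin m → EuclideanSpace ℝ (Fin n) := fun k => (WithLp.equiv 2 _).symm (f k) with hg
  constructor
  · -- phase retrieval → full spark
    intro hpr s hs
    by_contra hli
    have hn : 0 < n := by
      rcases Nat.eq_zero_or_pos n with h0 | h
      · exfalso; apply hli
        have hse : s = ∅ := Finset.card_eq_zero.mp (by omega)
        subst hse
        exact linearIndependent_empty_type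
      · exact h
    -- find u ⟂ f k for k ∈ s
    have hK1 : Submodule.span ℝ (Set.range (fun k : s => g k)) ≠ ⊤ := by
      intro htop
      apply hli
      have : LinearIndependent ℝ (fun k : s => g k) := by
        rw [linearIndependent_iff_card_eq_finrank_span]
        rw [Set.finrank, htop]
        simp [hs, finrank_euclideanSpace_fin]
      exact this.map' (WithLp.linearEquiv 2 ℝ (Fin n → ℝ)).toLinearMap (WithLp.linearEquiv 2 ℝ (Fin n → ℝ)).ker
    obtain ⟨u, hu0, hu⟩ := aux_orth_exists _ hK1
    -- find v ⟂ f k for k ∉ s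
    have hK2 : Submodule.span ℝ (Set.range (fun k : (sᶜ : Finset (Fin m)) => g k)) ≠ ⊤ := by
      intro htop
      have h1 : Set.finrank ℝ (Set.range (fun k : (sᶜ : Finset (Fin m)) => g k))
          ≤ Fintype.card (sᶜ : Finset (Fin m)) := finrank_range_le_card _
      rw [Set.finrank, htop] at h1
      simp only [finrank_top, finrank_euclideanSpace_fin, Fintype.card_coe] at h1
      have h2 : (sᶜ : Finset (Fin m)).card = m - s.card := by
        rw [Finset.card_compl]; simp
      omega
    obtain ⟨v, hv0, hv⟩ := aux_orth_exists _ hK2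
    have hus : ∀ k ∈ s, (inner ℝ (g k) u : ℝ) = 0 := fun k hk =>
      hu _ (Submodule.subset_span ⟨(⟨k, hk⟩ : s), rfl⟩)
    have hvs : ∀ k ∉ s, (inner ℝ (g k) v : ℝ) = 0 := fun k hk =>
      hv _ (Submodule.subset_span ⟨(⟨k, Finset.mem_compl.mpr hk⟩ : (sᶜ : Finset (Fin m))), rfl⟩)
    have hrip : ∀ (z : EuclideanSpace ℝ (Fin n)) k, rip z (f k) = (inner ℝ (g k) z : ℝ) := by
      intro z k
      rw [rip_eq_inner, real_inner_comm]
      rfl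
    have key : ∀ k, |rip (u + v) (f k)| = |rip (u - v) (f k)| := by
      intro k
      rw [hrip, hrip, inner_add_right, inner_sub_right]
      by_cases hk : k ∈ s
      · rw [hus k hk]; simp
      · rw [hvs k hk]; simp
    rcases hpr (u + v) (u - v) key with h | h
    · apply hv0
      have h2 : (2 : ℝ) • v = 0 := by
        have : u + v - (u - v) = 0 := by apply WithLp.ofLp_injective; simp only [WithLp.ofLp_sub, WithLp.ofLp_add, WithLp.ofLp_zero]; rw [h]; simp
        rw [two_smul]
        calc v + v = u + v - (u - v) := by abel
        _ = 0 := this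
      simpa using (smul_eq_zero.mp h2).resolve_left (by norm_num)
    · apply hu0
      have h2 : (2 : ℝ) • u = 0 := by
        have : u + v + (u - v) = 0 := by apply WithLp.ofLp_injective; simp only [WithLp.ofLp_sub, WithLp.ofLp_add, WithLp.ofLp_zero]; rw [h]; simp
        rw [two_smul]
        calc u + u = u + v + (u - v) := by abel
        _ = 0 := this
      simpa using (smul_eq_zero.mp h2).resolve_left (by norm_num)
  · -- full spark → phase retrieval
    intro hfs x y hxy
    rcases Nat.eq_zero_or_pos n with h0 | hn
    · left; subst h0; funext i; exact i.elim0
    set S : Finset (Fin m) := Finset.univ.filter (fun k => rip x (f k) = rip y (f k)) with hS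
    have hsplit : ∀ k, k ∉ S → rip x (f k) = - rip y (f k) := by
      intro k hk
      rcases abs_eq_abs.mp (hxy k) with h | h
      · exact absurd (Finset.mem_filter.mpr ⟨Finset.mem_univ k, h⟩) hk
      · exact h
    have hcard : S.card + Sᶜ.card = m := by
      rw [Finset.card_add_card_compl]; simp
    have hripl : ∀ (z w : Fin n → ℝ) k, rip z (f k) = (inner ℝ (g k) ((WithLp.equiv 2 (Fin n → ℝ)).symm z) : ℝ) := by
      intro z w k
      rw [rip_eq_inner, real_inner_comm]
    rcases le_or_gt n S.card with hSc | hSc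
    · left
      have hz : ((WithLp.equiv 2 (Fin n → ℝ)).symm x - (WithLp.equiv 2 (Fin n → ℝ)).symm y : EuclideanSpace ℝ (Fin n)) = 0 := by
        apply aux_zero g (fun s hs => (hfs s hs).map' (WithLp.linearEquiv 2 ℝ (Fin n → ℝ)).symm.toLinearMap (WithLp.linearEquiv 2 ℝ (Fin n → ℝ)).symm.ker) S hSc
        intro k hk
        rw [inner_sub_right, ← hripl x x k, ← hripl y y k]
        have := (Finset.mem_filter.mp hk).2
        rw [this, sub_self]
      have := sub_eq_zero.mp hz
      exact (WithLp.equiv 2 (Fin n → ℝ)).symm.injective this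
    · right
      have hSc' : n ≤ Sᶜ.card := by omega
      have hz : ((WithLp.equiv 2 (Fin n → ℝ)).symm x + (WithLp.equiv 2 (Fin n → ℝ)).symm y : EuclideanSpace ℝ (Fin n)) = 0 := by
        apply aux_zero g (fun s hs => (hfs s hs).map' (WithLp.linearEquiv 2 ℝ (Fin n → ℝ)).symm.toLinearMap (WithLp.linearEquiv 2 ℝ (Fin n → ℝ)).symm.ker) Sᶜ hSc'
        intro k hk
        rw [inner_add_right, ← hripl x x k, ← hripl y y k]
        have hns := hsplit k (Finset.mem_compl.mp hk)
        rw [hns, neg_add_cancel]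
      have := eq_neg_of_add_eq_zero_left hz
      simpa using congrArg WithLp.ofLp this
end

section
/- Let f₁, …, f_m ∈ ℂⁿ. The family is phase retrievable for ℂⁿ (i.e., for all x, y ∈ ℂⁿ, |⟨x,f_k⟩| = |⟨y,f_k⟩| for all k implies x = c y for some unimodular c ∈ ℂ) if and only if there do not exist u, v ∈ ℂⁿ with u ≠ 0, v ≠ 0, Im⟨u,v⟩ = 0, and Re(⟨u,f_k⟩ · conj(⟨v,f_k⟩)) = 0 for all k = 1,…,m. (This is the complex reformulation of the realified condition: no nonzero ξ, η ∈ ℝ^{2n} with ⟨Jξ,η⟩ = 0 and ⟨Φ_k ξ, η⟩ = 0 for all k, where ξ = j(u), η = j(v).) -/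
open Finset Complex

lemma cip_add_left {n : ℕ} (x y w : Fin n → ℂ) : cip (x+y) w = cip x w + cip y w := by
  simp [cip, add_mul, Finset.sum_add_distrib]

lemma cip_sub_left {n : ℕ} (x y w : Fin n → ℂ) : cip (x-y) w = cip x w - cip y w := by
  simp [cip, sub_mul, Finset.sum_sub_distrib]

lemma cip_smul_left {n : ℕ} (c : ℂ) (x w : Fin n → ℂ) : cip (c•x) w = c * cip x w := by
  simp [cip, Finset.mul_sum, mul_assoc]

lemma cip_sub_right {n : ℕ} (x y w : Fin n → ℂ) : cip w (x-y) = cip w x - cip w y := by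
  simp [cip, map_sub, mul_sub, Finset.sum_sub_distrib]

lemma cip_smul_right {n : ℕ} (c : ℂ) (x w : Fin n → ℂ) :
    cip x (c•w) = starRingEnd ℂ c * cip x w := by
  simp [cip, Finset.mul_sum, map_mul, mul_left_comm]

lemma cip_conj_symm {n : ℕ} (x y : Fin n → ℂ) : cip y x = starRingEnd ℂ (cip x y) := by
  simp [cip, map_sum, map_mul, mul_comm]

lemma cip_self {n : ℕ} (x : Fin n → ℂ) :
    cip x x = ((∑ i, Complex.normSq (x i) : ℝ) : ℂ) := by
  simp [cip, Complex.mul_conj]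

lemma re_mul_conj_addsub (a b : ℂ) :
    ((a+b) * starRingEnd ℂ (a-b)).re = Complex.normSq a - Complex.normSq b := by
  simp [Complex.mul_re, Complex.normSq_apply]; ring

lemma normSq_addsub (a b : ℂ) :
    Complex.normSq (a+b) - Complex.normSq (a-b) = 4 * (a * starRingEnd ℂ b).re := by
  simp [Complex.normSq_apply, Complex.mul_re]; ring

lemma main_aux {n m : ℕ} {f : Fin m → (Fin n → ℂ)}
    (h : ¬ ∃ u v : Fin n → ℂ, u ≠ 0 ∧ v ≠ 0 ∧ (cip u v).im = 0 ∧
      ∀ k, (cip u (f k) * starRingEnd ℂ (cip v (f k))).re = 0)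
    (x y : Fin n → ℂ)
    (hxy : ∀ k, ‖cip x (f k)‖ = ‖cip y (f k)‖)
    (c₀ : ℂ) (hc₀ : ‖c₀‖ = 1) (hreal : (cip x (c₀ • y)).im = 0) :
    ∃ c : ℂ, ‖c‖ = 1 ∧ x = c • y := by
  set y' := c₀ • y with hy'
  have e1 : (cip x x).im = 0 := by rw [cip_self]; simp
  have e2 : (cip y' y').im = 0 := by rw [cip_self]; simp
  have e3 : (cip y' x).im = 0 := by rw [cip_conj_symm]; simp [hreal]
  have him : (cip (x + y') (x - y')).im = 0 := by
    rw [cip_add_left, cip_sub_right, cip_sub_right]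
    simp only [Complex.add_im, Complex.sub_im, e1, e2, e3]
    simp [hreal]
  have hre : ∀ k, (cip (x + y') (f k) * starRingEnd ℂ (cip (x - y') (f k))).re = 0 := by
    intro k
    have hn : Complex.normSq c₀ = 1 := by
      rw [Complex.normSq_eq_norm_sq, hc₀]; norm_num
    rw [cip_add_left, cip_sub_left, re_mul_conj_addsub, hy', cip_smul_left,
      Complex.normSq_mul, hn, one_mul, ← Complex.sq_norm, ← Complex.sq_norm (cip y (f k)),
      hxy k]
    ring
  by_cases hv : x - y' = 0
  · exact ⟨c₀, hc₀, sub_eq_zero.1 hv⟩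
  · by_cases hu : x + y' = 0
    · refine ⟨-c₀, by simpa using hc₀, ?_⟩
      have hx : x = -y' := eq_neg_of_add_eq_zero_left hu
      rw [hx, hy', neg_smul]
    · exact absurd ⟨x + y', x - y', hu, hv, him, hre⟩ h

theorem complex_phase_retrieval_iff {n m : ℕ} (f : Fin m → (Fin n → ℂ)) :
    (∀ x y : Fin n → ℂ,
      (∀ k, ‖cip x (f k)‖ = ‖cip y (f k)‖) →
      ∃ c : ℂ, ‖c‖ = 1 ∧ x = c • y) ↔
    ¬ ∃ u v : Fin n → ℂ, u ≠ 0 ∧ v ≠ 0 ∧ (cip u v).im = 0 ∧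
      ∀ k, (cip u (f k) * starRingEnd ℂ (cip v (f k))).re = 0 := by
  constructor
  · -- forward
    intro h
    rintro ⟨u, v, hu, hv, him, hre⟩
    have habs : ∀ k, ‖cip (u+v) (f k)‖ = ‖cip (u-v) (f k)‖ := by
      intro k
      have hns : Complex.normSq (cip u (f k) + cip v (f k))
          = Complex.normSq (cip u (f k) - cip v (f k)) := by
        have h4 := normSq_addsub (cip u (f k)) (cip v (f k))
        rw [hre k] at h4
        linarith
      rw [cip_add_left, cip_sub_left, Complex.norm_def, Complex.norm_def, hns]
    obtain ⟨c, hc, heq⟩ := h (u+v) (u-v) habs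
    by_cases hcm : c = -1
    · apply hu
      funext i
      have hi := congrFun heq i
      simp only [Pi.add_apply, Pi.sub_apply, Pi.smul_apply, smul_eq_mul, hcm] at hi
      have : u i = 0 := by linear_combination hi / 2
      simpa using this
    · exfalso
      have E : cip u v + cip v v = c * (cip u v - cip v v) := by
        have := congrArg (fun w => cip w v) heq
        simpa [cip_add_left, cip_sub_left, cip_smul_left] using this
      set S : ℝ := ∑ i, Complex.normSq (v i) with hS
      have hvv : cip v v = (S : ℂ) := cip_self v
      have hSpos : 0 < S := by
        obtain ⟨i, hi⟩ := Function.ne_iff.1 hv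
        exact Finset.sum_pos' (fun j _ => Complex.normSq_nonneg _)
          ⟨i, Finset.mem_univ i, Complex.normSq_pos.2 (by simpa using hi)⟩
      rw [hvv] at E
      have h1 : (cip u v).re + S = c.re * ((cip u v).re - S) := by
        have := congrArg Complex.re E
        simpa [Complex.mul_re, Complex.mul_im, him] using this
      have h2 : (0:ℝ) = c.im * ((cip u v).re - S) := by
        have := congrArg Complex.im E
        simpa [Complex.mul_re, Complex.mul_im, him] using this
      have h3 : c.re^2 + c.im^2 = 1 := by
        have hs := Complex.sq_norm c
        rw [hc] at hs
        simp [Complex.normSq_apply] at hs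
        nlinarith [hs]
      rcases mul_eq_zero.1 h2.symm with h4 | h4
      · have h5 : (c.re - 1) * (c.re + 1) = 0 := by nlinarith
        rcases mul_eq_zero.1 h5 with h5 | h5
        · have h6 : c.re = 1 := by linarith
          rw [h6, one_mul] at h1; linarith
        · refine hcm (Complex.ext ?_ ?_)
          · simp; linarith
          · simp [h4]
      · have h6 : (cip u v).re = S := by linarith
        rw [h6] at h1
        simp at h1
        linarith
  · -- reverse
    intro h x y hxy
    by_cases hz0 : cip x y = 0
    · exact main_aux h x y hxy 1 (by simp) (by simp [cip_smul_right, hz0])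
    · refine main_aux h x y hxy (cip x y / (‖cip x y‖ : ℂ)) ?_ ?_
      · rw [norm_div, Complex.norm_real, Real.norm_eq_abs, _root_.abs_of_nonneg (norm_nonneg _),
          div_self (norm_ne_zero_iff.mpr hz0)]
      · have hstep : starRingEnd ℂ (cip x y / (‖cip x y‖ : ℂ)) * cip x y
            = ((Complex.normSq (cip x y) / ‖cip x y‖ : ℝ) : ℂ) := by
          rw [map_div₀, Complex.conj_ofReal]
          push_cast
          rw [div_mul_eq_mul_div, ← Complex.normSq_eq_conj_mul_self]
        rw [cip_smul_right, hstep, Complex.ofReal_im]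
end

section
/- For every integer n ≥ 2 there exists a family of m = 4n − 4 vectors f₁, …, f_{4n−4} ∈ ℂⁿ that is phase retrievable for ℂⁿ, i.e., for all x, y ∈ ℂⁿ, |⟨x,f_k⟩| = |⟨y,f_k⟩| for all k = 1,…,4n−4 implies x = c y for some c ∈ ℂ with |c| = 1. -/
open Finset Polynomial Complex ComplexConjugate

noncomputable def pol {n : ℕ} (x : Fin n → ℂ) : Polynomial ℂ :=
  ∑ i : Fin n, C (x i) * X ^ (i : ℕ)

def dg {n : ℕ} (x : Fin n → ℂ) : Fin n → ℂ := fun i => conj (x i.rev)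

noncomputable def dil (c : ℂ) (p : Polynomial ℂ) : Polynomial ℂ := p.comp (C c * X)

lemma eval_pol {n : ℕ} (x : Fin n → ℂ) (z : ℂ) :
    (pol x).eval z = ∑ i : Fin n, x i * z ^ (i : ℕ) := by
  simp [pol, eval_finset_sum]

lemma coeff_pol {n : ℕ} (x : Fin n → ℂ) (k : ℕ) :
    (pol x).coeff k = if h : k < n then x ⟨k, h⟩ else 0 := by
  rw [pol, finset_sum_coeff]
  simp only [coeff_C_mul, coeff_X_pow]
  by_cases h : k < n
  · rw [dif_pos h, Finset.sum_eq_single (⟨k, h⟩ : Fin n)]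
    · simp
    · intro b _ hb
      have : ¬ (k = (b : ℕ)) := fun hc => hb (by apply Fin.ext; simp [hc.symm])
      simp [this]
    · simp
  · rw [dif_neg h]
    apply Finset.sum_eq_zero
    intro i _
    have : ¬ (k = (i : ℕ)) := by
      intro hc; exact h (hc ▸ i.isLt)
    simp [this]

lemma natDegree_pol_le {n : ℕ} (x : Fin n → ℂ) : (pol x).natDegree ≤ n - 1 := by
  rw [natDegree_le_iff_coeff_eq_zero]
  intro N hN
  rw [coeff_pol, dif_neg (by omega)]

lemma pol_eq_zero_iff {n : ℕ} (x : Fin n → ℂ) : pol x = 0 ↔ x = 0 := by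
  constructor
  · intro h
    funext i
    have := congrArg (fun p => Polynomial.coeff p (i : ℕ)) h
    simpa [coeff_pol, i.isLt] using this
  · intro h; simp [h, pol]

lemma pol_smul {n : ℕ} (c : ℂ) (x : Fin n → ℂ) : pol (c • x) = C c * pol x := by
  simp only [pol, Finset.mul_sum, Pi.smul_apply, smul_eq_mul, map_mul]
  exact Finset.sum_congr rfl fun i _ => by ring

lemma dg_eq_zero_iff {n : ℕ} (x : Fin n → ℂ) : dg x = 0 ↔ x = 0 := by
  constructor
  · intro h
    funext j
    have := congrFun h j.rev
    simp only [dg, Fin.rev_rev, Pi.zero_apply] at this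
    have h2 := congrArg (starRingEnd ℂ) this
    simpa using h2
  · intro h; funext j; simp [dg, h]

lemma coeff_dil (c : ℂ) (p : Polynomial ℂ) (k : ℕ) :
    (dil c p).coeff k = c ^ k * p.coeff k := by
  induction p using Polynomial.induction_on' with
  | add p q hp hq =>
    simp only [dil] at hp hq
    simp [dil, add_comp, coeff_add, hp, hq, mul_add]
  | monomial i a =>
    rw [dil, ← C_mul_X_pow_eq_monomial, mul_comp, C_comp, X_pow_comp, mul_pow, ← C_pow]
    by_cases hki : k = i
    · subst hki
      simp only [coeff_C_mul, coeff_X_pow, coeff_monomial, if_pos rfl]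
      ring
    · have h0 : (X ^ i : Polynomial ℂ).coeff k = 0 := by rw [coeff_X_pow, if_neg hki]
      simp only [coeff_C_mul, h0, mul_zero]

lemma eval_dil (c : ℂ) (p : Polynomial ℂ) (z : ℂ) :
    (dil c p).eval z = p.eval (c * z) := by
  simp [dil, eval_comp]

lemma dil_mul (c : ℂ) (p q : Polynomial ℂ) : dil c (p * q) = dil c p * dil c q :=
  mul_comp p q (C c * X)

lemma dil_dil (c d : ℂ) (p : Polynomial ℂ) : dil c (dil d p) = dil (d * c) p := by
  rw [dil, dil, dil, comp_assoc]
  congr 1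
  rw [mul_comp, C_comp, X_comp, ← mul_assoc, ← C_mul]

lemma dil_inv (c : ℂ) (hc : c ≠ 0) (p : Polynomial ℂ) : dil c⁻¹ (dil c p) = p := by
  rw [dil_dil, mul_inv_cancel₀ hc, dil]
  simp

lemma natDegree_dil_le (c : ℂ) (p : Polynomial ℂ) : (dil c p).natDegree ≤ p.natDegree := by
  rw [natDegree_le_iff_coeff_eq_zero]
  intro N hN
  rw [coeff_dil, coeff_eq_zero_of_natDegree_lt hN, mul_zero]

lemma natDegree_dil (c : ℂ) (hc : c ≠ 0) (p : Polynomial ℂ) :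
    (dil c p).natDegree = p.natDegree := by
  refine le_antisymm (natDegree_dil_le c p) ?_
  conv_lhs => rw [← dil_inv c hc p]
  exact natDegree_dil_le _ _

lemma dil_ne_zero {c : ℂ} (hc : c ≠ 0) {p : Polynomial ℂ} (hp : p ≠ 0) : dil c p ≠ 0 := by
  intro h
  apply hp
  have := congrArg (dil c⁻¹) h
  rwa [dil_inv c hc, dil, zero_comp] at this

lemma eval_pol_dg {n : ℕ} (x : Fin n → ℂ) {z s : ℂ} (hz : z ≠ 0) (hs : s ≠ 0)
    (hzs : z * conj z = s) :
    (pol (dg x)).eval (z / s) = (z / s) ^ (n - 1) * conj ((pol x).eval z) := by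
  have hconj : conj z = s / z := by
    rw [eq_div_iff hz, mul_comm]; exact hzs
  have hw : z / s ≠ 0 := div_ne_zero hz hs
  rw [eval_pol, eval_pol, map_sum]
  rw [show ∑ i : Fin n, dg x i * (z / s) ^ (i : ℕ)
      = ∑ j : Fin n, dg x j.rev * (z / s) ^ ((Fin.rev j : Fin n) : ℕ) from
    (Fintype.sum_equiv (Fin.revPerm) _ _ (fun j => rfl)).symm]
  rw [Finset.mul_sum]
  refine Finset.sum_congr rfl fun j _ => ?_
  have hj : (j : ℕ) < n := j.isLt
  rw [dg, Fin.rev_rev, map_mul, map_pow, hconj]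
  have hrev : ((Fin.rev j : Fin n) : ℕ) = n - 1 - (j : ℕ) := by
    rw [Fin.val_rev]; omega
  rw [hrev]
  have hpow : (z / s) ^ (n - 1) = (z / s) ^ (n - 1 - (j : ℕ)) * (z / s) ^ (j : ℕ) := by
    rw [← pow_add]; congr 1; omega
  have hsz : (s / z) ^ (j : ℕ) = ((z / s) ^ (j : ℕ))⁻¹ := by
    rw [← inv_pow, inv_div]
  rw [hpow, hsz]
  field_simp

lemma cpow_inj : ∀ k l : ℕ, ((2 : ℂ)⁻¹) ^ k = ((2 : ℂ)⁻¹) ^ l → k = l := by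
  intro k l h
  have h2 := congrArg (‖·‖) h
  simp only [norm_pow, norm_inv, Complex.norm_two] at h2
  have h3 : ((2 : ℝ)) ^ k = 2 ^ l := by
    have := congrArg (fun t : ℝ => t⁻¹) h2
    simpa [← inv_pow] using this
  have h4 : ((2 ^ k : ℕ) : ℝ) = ((2 ^ l : ℕ) : ℝ) := by push_cast; exact h3
  exact Nat.pow_right_injective (by norm_num) (Nat.cast_injective h4)

lemma key {n : ℕ} (hn : 2 ≤ n) (x y : Fin n → ℂ)
    (h1 : pol x * pol (dg x) = pol y * pol (dg y))
    (h2 : pol x * dil 2⁻¹ (pol (dg x)) = pol y * dil 2⁻¹ (pol (dg y))) :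
    ∃ c : ℂ, ‖c‖ = 1 ∧ x = c • y := by
  have hc2 : ((2 : ℂ)⁻¹) ≠ 0 := by norm_num
  have hdg0 : dg (0 : Fin n → ℂ) = 0 := by funext j; simp [dg]
  by_cases hy : y = 0
  · have hx : x = 0 := by
      rw [hy] at h1
      have h0 : pol x * pol (dg x) = 0 := by
        rw [h1, hdg0, (pol_eq_zero_iff (0 : Fin n → ℂ)).mpr rfl, mul_zero]
      rcases mul_eq_zero.mp h0 with h | h
      · exact (pol_eq_zero_iff x).mp h
      · exact (dg_eq_zero_iff x).mp ((pol_eq_zero_iff (dg x)).mp h)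
    exact ⟨1, by simp, by simp [hx, hy]⟩
  by_cases hx : x = 0
  · exfalso
    rw [hx] at h1
    have : pol y * pol (dg y) = 0 := by
      rw [← h1, hdg0, (pol_eq_zero_iff (0 : Fin n → ℂ)).mpr rfl, mul_zero]
    rcases mul_eq_zero.mp this with h | h
    · exact hy ((pol_eq_zero_iff y).mp h)
    · exact hy ((dg_eq_zero_iff y).mp ((pol_eq_zero_iff (dg y)).mp h))
  -- nonzero setup
  have hpx : pol x ≠ 0 := fun h => hx ((pol_eq_zero_iff x).mp h)
  have hpy : pol y ≠ 0 := fun h => hy ((pol_eq_zero_iff y).mp h)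
  set u : Polynomial ℂ := pol (dg x) with hu_def
  set v : Polynomial ℂ := pol (dg y) with hv_def
  have hu : u ≠ 0 := fun h => hx ((dg_eq_zero_iff x).mp ((pol_eq_zero_iff (dg x)).mp h))
  have hv : v ≠ 0 := fun h => hy ((dg_eq_zero_iff y).mp ((pol_eq_zero_iff (dg y)).mp h))
  -- cross identity
  have hcross : u * dil 2⁻¹ v = dil 2⁻¹ u * v := by
    apply mul_left_cancel₀ hpx
    calc pol x * (u * dil 2⁻¹ v) = (pol x * u) * dil 2⁻¹ v := by ring
    _ = (pol y * v) * dil 2⁻¹ v := by rw [h1]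
    _ = (pol y * dil 2⁻¹ v) * v := by ring
    _ = (pol x * dil 2⁻¹ u) * v := by rw [← h2]
    _ = pol x * (dil 2⁻¹ u * v) := by ring
  -- gcd decomposition
  set g : Polynomial ℂ := EuclideanDomain.gcd u v with hg_def
  have hg : g ≠ 0 := fun h => hu (EuclideanDomain.gcd_eq_zero_iff.mp h).1
  obtain ⟨u₁, hu₁⟩ : g ∣ u := EuclideanDomain.gcd_dvd_left u v
  obtain ⟨v₁, hv₁⟩ : g ∣ v := EuclideanDomain.gcd_dvd_right u v
  have hu₁0 : u₁ ≠ 0 := fun h => hu (by rw [hu₁, h, mul_zero])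
  have hv₁0 : v₁ ≠ 0 := fun h => hv (by rw [hv₁, h, mul_zero])
  have hcop : IsCoprime u₁ v₁ := by
    refine ⟨EuclideanDomain.gcdA u v, EuclideanDomain.gcdB u v, ?_⟩
    apply mul_left_cancel₀ hg
    rw [mul_one]
    symm
    calc g = u * EuclideanDomain.gcdA u v + v * EuclideanDomain.gcdB u v := by
          rw [hg_def]; exact EuclideanDomain.gcd_eq_gcd_ab u v
    _ = g * (EuclideanDomain.gcdA u v * u₁ + EuclideanDomain.gcdB u v * v₁) := by
          rw [hu₁, hv₁]; ring
  have hdg : dil 2⁻¹ g ≠ 0 := dil_ne_zero hc2 hg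
  -- reduced identity
  have hred : u₁ * dil 2⁻¹ v₁ = dil 2⁻¹ u₁ * v₁ := by
    apply mul_left_cancel₀ (mul_ne_zero hg hdg)
    rw [hu₁, hv₁, dil_mul, dil_mul] at hcross
    linear_combination hcross
  have hdvd : u₁ ∣ dil 2⁻¹ u₁ :=
    hcop.dvd_of_dvd_mul_right ⟨dil 2⁻¹ v₁, hred.symm⟩
  obtain ⟨t, ht⟩ := hdvd
  have ht0 : t ≠ 0 := by
    intro h
    exact dil_ne_zero hc2 hu₁0 (by rw [ht, h, mul_zero])
  have hdeg : (dil 2⁻¹ u₁).natDegree = u₁.natDegree := natDegree_dil _ hc2 _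
  have htdeg : t.natDegree = 0 := by
    have := natDegree_mul hu₁0 ht0
    rw [← ht, hdeg] at this
    omega
  set e : ℂ := t.coeff 0 with he_def
  have hte : t = C e := eq_C_of_natDegree_eq_zero htdeg
  have he0 : e ≠ 0 := fun h => ht0 (by rw [hte, h, map_zero])
  -- support characterization
  have hsupp_u : ∀ k ∈ u₁.support, ((2 : ℂ)⁻¹) ^ k = e := by
    intro k hk
    have hco := congrArg (fun p => Polynomial.coeff p k) ht
    simp only [coeff_dil, hte, coeff_mul_C] at hco
    have hak : u₁.coeff k ≠ 0 := Polynomial.mem_support_iff.mp hk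
    exact mul_right_cancel₀ hak (hco.trans (mul_comm _ _))
  set k₀ : ℕ := u₁.natDegree with hk₀_def
  have hk₀mem : k₀ ∈ u₁.support := natDegree_mem_support_of_nonzero hu₁0
  have hsub_u : ∀ k ∈ u₁.support, k = k₀ := fun k hk =>
    cpow_inj k k₀ ((hsupp_u k hk).trans (hsupp_u k₀ hk₀mem).symm)
  -- v₁ also scaled
  have hv₁C : dil 2⁻¹ v₁ = v₁ * C e := by
    apply mul_left_cancel₀ hu₁0
    rw [hred, ht, hte]
    ring
  have hsub_v : ∀ k ∈ v₁.support, k = k₀ := by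
    intro k hk
    have hco := congrArg (fun p => Polynomial.coeff p k) hv₁C
    simp only [coeff_dil, coeff_mul_C] at hco
    have hak : v₁.coeff k ≠ 0 := Polynomial.mem_support_iff.mp hk
    have h1' : ((2:ℂ)⁻¹) ^ k = e := mul_right_cancel₀ hak (hco.trans (mul_comm _ _))
    exact cpow_inj k k₀ (h1'.trans (hsupp_u k₀ hk₀mem).symm)
  -- coprimality forces k₀ = 0
  have heval0 : ∀ (w : Polynomial ℂ), (∀ k ∈ w.support, k = k₀) → k₀ ≠ 0 → w.eval 0 = 0 := by
    intro w hw hk0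
    rw [← coeff_zero_eq_eval_zero]
    by_cases h : (0 : ℕ) ∈ w.support
    · exact absurd (hw 0 h).symm hk0
    · exact Polynomial.notMem_support_iff.mp h
  have hk₀0 : k₀ = 0 := by
    by_contra hk0
    obtain ⟨α, β, hab⟩ := hcop
    have := congrArg (Polynomial.eval 0) hab
    simp only [eval_add, eval_mul, heval0 u₁ hsub_u hk0, heval0 v₁ hsub_v hk0,
      mul_zero, add_zero, eval_one, zero_add] at this
    exact one_ne_zero this.symm
  -- u₁ v₁ constants
  have hu₁deg : u₁.natDegree = 0 := hk₀_def ▸ hk₀0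
  have hv₁deg : v₁.natDegree = 0 := by
    have := natDegree_mem_support_of_nonzero hv₁0
    have := hsub_v _ this
    omega
  set a : ℂ := u₁.coeff 0 with ha_def
  set b : ℂ := v₁.coeff 0 with hb_def
  have hu₁C : u₁ = C a := eq_C_of_natDegree_eq_zero hu₁deg
  have hv₁Cb : v₁ = C b := eq_C_of_natDegree_eq_zero hv₁deg
  have ha0 : a ≠ 0 := fun h => hu₁0 (by rw [hu₁C, h, map_zero])
  have hb0 : b ≠ 0 := fun h => hv₁0 (by rw [hv₁Cb, h, map_zero])
  set μ : ℂ := b / a with hμ_def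
  have hμ0 : μ ≠ 0 := div_ne_zero hb0 ha0
  have hμu : v = C μ * u := by
    apply mul_left_cancel₀ (show (C a : Polynomial ℂ) ≠ 0 by simpa using ha0)
    rw [hu₁, hv₁, hu₁C, hv₁Cb]
    have hba : μ * a = b := by rw [hμ_def]; field_simp
    rw [← hba, C_mul]
    ring
  -- coefficientwise relation
  have hcoeff : ∀ i : Fin n, dg y i = μ * dg x i := by
    intro i
    have := congrArg (fun p => Polynomial.coeff p (i : ℕ)) hμu
    simp only [hv_def, hu_def, coeff_pol, coeff_C_mul, i.isLt, dif_pos] at this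
    simpa using this
  have hyx : ∀ j, y j = conj μ * x j := by
    intro j
    have := hcoeff j.rev
    simp only [dg, Fin.rev_rev] at this
    have h2 := congrArg (starRingEnd ℂ) this
    simpa using h2
  set ν : ℂ := conj μ with hν_def
  have hν0 : ν ≠ 0 := by simpa [hν_def] using hμ0
  have hysmul : y = ν • x := funext fun j => by simpa using hyx j
  -- unimodularity from h1
  have hpy_eq : pol y = C ν * pol x := by rw [hysmul, pol_smul]
  have hnm : ν * μ = 1 := by
    have hP : pol x * u ≠ 0 := mul_ne_zero hpx hu
    have : pol x * u = C (ν * μ) * (pol x * u) := by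
      conv_lhs => rw [h1, hpy_eq, hμu]
      rw [C_mul]
      ring
    have h0 : (C (ν * μ) - 1) * (pol x * u) = 0 := by linear_combination -this
    rcases mul_eq_zero.mp h0 with h | h
    · have : C (ν * μ) = (1 : Polynomial ℂ) := by linear_combination h
      have := congrArg (fun p => Polynomial.coeff p 0) this
      simpa using this
    · exact absurd h hP
  have habs : ‖μ‖ = 1 := by
    have : Complex.normSq μ = 1 := by
      have : (Complex.normSq μ : ℂ) = 1 := by
        rw [← Complex.mul_conj μ]
        rw [mul_comm] at hnm
        simpa [hν_def, mul_comm] using hnm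
      exact_mod_cast this
    rw [Complex.norm_def, this, Real.sqrt_one]
  refine ⟨ν⁻¹, ?_, ?_⟩
  · rw [norm_inv]
    simp [hν_def, habs]
  · funext j
    have := hyx j
    simp only [Pi.smul_apply, smul_eq_mul]
    rw [this, hν_def]
    have hc : (starRingEnd ℂ) μ ≠ 0 := by simpa using hμ0
    rw [inv_mul_cancel_left₀ hc]

lemma coeff_mul_top {P Q : Polynomial ℂ} {a b : ℕ} (ha : P.natDegree ≤ a) (hb : Q.natDegree ≤ b) :
    (P * Q).coeff (a + b) = P.coeff a * Q.coeff b := by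
  rw [coeff_mul]
  apply Finset.sum_eq_single ((a, b) : ℕ × ℕ)
  · rintro ⟨i, j⟩ hmem hne
    rw [Finset.HasAntidiagonal.mem_antidiagonal] at hmem
    by_cases hi : a < i
    · rw [coeff_eq_zero_of_natDegree_lt (lt_of_le_of_lt ha hi), zero_mul]
    · have hne' : ¬(i = a ∧ j = b) := fun h => hne (by rw [h.1, h.2])
      have hj : b < j := by omega
      rw [coeff_eq_zero_of_natDegree_lt (lt_of_le_of_lt hb hj), mul_zero]
  · intro hmem
    exact absurd (Finset.HasAntidiagonal.mem_antidiagonal.mpr (rfl : a + b = a + b)) hmem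

lemma abs_of_pow_eq_one {ζ : ℂ} {m : ℕ} (hm : m ≠ 0) (h : ζ ^ m = 1) : ‖ζ‖ = 1 := by
  have h1 : (‖ζ‖) ^ m = 1 := by rw [← norm_pow, h, norm_one]
  have h0 : 0 ≤ ‖ζ‖ := norm_nonneg _
  rcases lt_trichotomy (‖ζ‖) 1 with hlt | heq | hgt
  · have := pow_lt_one₀ h0 hlt hm
    rw [h1] at this; exact absurd this (lt_irrefl 1)
  · exact heq
  · have := one_lt_pow₀ hgt hm
    rw [h1] at this; exact absurd this (lt_irrefl 1)

theorem exists_phase_retrievable_4n_sub_4 (n : ℕ) (hn : 2 ≤ n) :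
    ∃ f : Fin (4 * n - 4) → (Fin n → ℂ),
      ∀ x y : Fin n → ℂ,
        (∀ k, ‖cip x (f k)‖ = ‖cip y (f k)‖) →
        ∃ c : ℂ, ‖c‖ = 1 ∧ x = c • y := by
  have hm1 : 2 * n - 1 ≠ 0 := by omega
  have hm2 : 2 * n - 3 ≠ 0 := by omega
  set ω : ℂ := Complex.exp (2 * Real.pi * Complex.I / (2 * n - 1 : ℕ)) with hω_def
  set μP : ℂ := Complex.exp (2 * Real.pi * Complex.I / (2 * n - 3 : ℕ)) with hμP_def
  have hω : IsPrimitiveRoot ω (2 * n - 1) := Complex.isPrimitiveRoot_exp _ hm1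
  have hμ : IsPrimitiveRoot μP (2 * n - 3) := Complex.isPrimitiveRoot_exp _ hm2
  have habsω : ‖ω‖ = 1 := abs_of_pow_eq_one hm1 hω.pow_eq_one
  have habsμ : ‖μP‖ = 1 := abs_of_pow_eq_one hm2 hμ.pow_eq_one
  have hων : ω ≠ 0 := fun h => by simp [hω_def, Complex.exp_ne_zero] at h
  have hμν : μP ≠ 0 := fun h => by simp [hμP_def, Complex.exp_ne_zero] at h
  have hsq2 : ((Real.sqrt 2 : ℝ) : ℂ) ≠ 0 := by
    simp only [ne_eq, Complex.ofReal_eq_zero]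
    positivity
  set z : Fin (4 * n - 4) → ℂ := fun k =>
    if (k : ℕ) < 2 * n - 1 then ω ^ (k : ℕ)
    else ((Real.sqrt 2 : ℝ) : ℂ) * μP ^ ((k : ℕ) - (2 * n - 1)) with hz_def
  refine ⟨fun k i => conj (z k ^ (i : ℕ)), ?_⟩
  intro x y hxy
  have hev : ∀ (w : Fin n → ℂ) (k : Fin (4 * n - 4)),
      cip w (fun i => conj (z k ^ (i : ℕ))) = (pol w).eval (z k) := by
    intro w k
    rw [cip, eval_pol]
    exact Finset.sum_congr rfl fun i _ => by simp
  have habs : ∀ k, ‖(pol x).eval (z k)‖ = ‖(pol y).eval (z k)‖ := by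
    intro k
    rw [← hev x k, ← hev y k]
    exact hxy k
  have hsq : ∀ k, (pol x).eval (z k) * conj ((pol x).eval (z k))
      = (pol y).eval (z k) * conj ((pol y).eval (z k)) := by
    intro k
    rw [Complex.mul_conj, Complex.mul_conj]
    norm_cast
    rw [← Complex.sq_norm, ← Complex.sq_norm, habs k]
  -- family 1 : the polynomial identity on the unit circle
  have hz1 : ∀ j : Fin (2 * n - 1), z ⟨(j : ℕ), by omega⟩ = ω ^ (j : ℕ) := by
    intro j
    simp only [hz_def]
    rw [if_pos]
    exact j.isLt
  set A : Polynomial ℂ := pol x * pol (dg x) - pol y * pol (dg y) with hA_def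
  have hAdeg : A.natDegree ≤ 2 * n - 2 := by
    apply (natDegree_sub_le _ _).trans
    apply max_le
    · exact natDegree_mul_le.trans (by
        have := natDegree_pol_le x; have := natDegree_pol_le (dg x); omega)
    · exact natDegree_mul_le.trans (by
        have := natDegree_pol_le y; have := natDegree_pol_le (dg y); omega)
  have hAeval : ∀ j : Fin (2 * n - 1), A.eval (ω ^ (j : ℕ)) = 0 := by
    intro j
    set zj : ℂ := ω ^ (j : ℕ) with hzj_def
    have hzj0 : zj ≠ 0 := pow_ne_zero _ hων
    have habszj : ‖zj‖ = 1 := by rw [hzj_def, norm_pow, habsω, one_pow]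
    have hzz : zj * conj zj = 1 := by
      have hns : Complex.normSq zj = 1 := by rw [← Complex.sq_norm, habszj, one_pow]
      rw [Complex.mul_conj, hns, Complex.ofReal_one]
    have hdx : (pol (dg x)).eval zj = zj ^ (n - 1) * conj ((pol x).eval zj) := by
      have := eval_pol_dg x hzj0 one_ne_zero hzz
      simpa using this
    have hdy : (pol (dg y)).eval zj = zj ^ (n - 1) * conj ((pol y).eval zj) := by
      have := eval_pol_dg y hzj0 one_ne_zero hzz
      simpa using this
    have hind := hsq ⟨(j : ℕ), by omega⟩
    rw [hz1 j] at hind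
    rw [hA_def, eval_sub, eval_mul, eval_mul, hdx, hdy]
    calc (pol x).eval zj * (zj ^ (n - 1) * conj ((pol x).eval zj))
        - (pol y).eval zj * (zj ^ (n - 1) * conj ((pol y).eval zj))
        = zj ^ (n - 1) * ((pol x).eval zj * conj ((pol x).eval zj)
          - (pol y).eval zj * conj ((pol y).eval zj)) := by ring
    _ = 0 := by rw [hind, sub_self, mul_zero]
  have hA0 : A = 0 := by
    apply Polynomial.eq_zero_of_natDegree_lt_card_of_eval_eq_zero A
      (f := fun j : Fin (2 * n - 1) => ω ^ (j : ℕ))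
    · intro i j h
      exact Fin.ext (hω.pow_inj i.isLt j.isLt h)
    · exact hAeval
    · rw [Fintype.card_fin]; omega
  have h1 : pol x * pol (dg x) = pol y * pol (dg y) := by
    have := sub_eq_zero.mp hA0
    exact this
  -- family 2 : the identity on the circle of radius √2
  have hz2 : ∀ j : Fin (2 * n - 3),
      z ⟨2 * n - 1 + (j : ℕ), by omega⟩ = ((Real.sqrt 2 : ℝ) : ℂ) * μP ^ (j : ℕ) := by
    intro j
    simp only [hz_def]
    rw [if_neg (by omega)]
    congr 2
    omega
  set B : Polynomial ℂ := pol x * dil 2⁻¹ (pol (dg x)) - pol y * dil 2⁻¹ (pol (dg y)) with hB_def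
  have hBdeg : B.natDegree ≤ 2 * n - 2 := by
    apply (natDegree_sub_le _ _).trans
    apply max_le
    · exact natDegree_mul_le.trans (by
        have h1' := natDegree_pol_le x
        have h2' := (natDegree_dil_le 2⁻¹ (pol (dg x))).trans (natDegree_pol_le (dg x))
        omega)
    · exact natDegree_mul_le.trans (by
        have h1' := natDegree_pol_le y
        have h2' := (natDegree_dil_le 2⁻¹ (pol (dg y))).trans (natDegree_pol_le (dg y))
        omega)
  have hBeval : ∀ j : Fin (2 * n - 3), B.eval (((Real.sqrt 2 : ℝ) : ℂ) * μP ^ (j : ℕ)) = 0 := by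
    intro j
    set wj : ℂ := ((Real.sqrt 2 : ℝ) : ℂ) * μP ^ (j : ℕ) with hwj_def
    have hwj0 : wj ≠ 0 := mul_ne_zero hsq2 (pow_ne_zero _ hμν)
    have habswj : ‖wj‖ = Real.sqrt 2 := by
      rw [hwj_def, norm_mul, norm_pow, habsμ, one_pow, mul_one, Complex.norm_real, Real.norm_eq_abs,
        _root_.abs_of_nonneg (Real.sqrt_nonneg 2)]
    have hzz : wj * conj wj = 2 := by
      have hns : Complex.normSq wj = 2 := by
        rw [← Complex.sq_norm, habswj, Real.sq_sqrt (by norm_num : (0:ℝ) ≤ 2)]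
      rw [Complex.mul_conj, hns]
      norm_num
    have hdx : (pol (dg x)).eval (wj / 2) = (wj / 2) ^ (n - 1) * conj ((pol x).eval wj) :=
      eval_pol_dg x hwj0 two_ne_zero hzz
    have hdy : (pol (dg y)).eval (wj / 2) = (wj / 2) ^ (n - 1) * conj ((pol y).eval wj) :=
      eval_pol_dg y hwj0 two_ne_zero hzz
    have hind := hsq ⟨2 * n - 1 + (j : ℕ), by omega⟩
    rw [hz2 j, ← hwj_def] at hind
    have hmulw : (2 : ℂ)⁻¹ * wj = wj / 2 := by rw [inv_mul_eq_div]
    rw [hB_def, eval_sub, eval_mul, eval_mul, eval_dil, eval_dil, hmulw, hdx, hdy]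
    calc (pol x).eval wj * ((wj / 2) ^ (n - 1) * conj ((pol x).eval wj))
        - (pol y).eval wj * ((wj / 2) ^ (n - 1) * conj ((pol y).eval wj))
        = (wj / 2) ^ (n - 1) * ((pol x).eval wj * conj ((pol x).eval wj)
          - (pol y).eval wj * conj ((pol y).eval wj)) := by ring
    _ = 0 := by rw [hind, sub_self, mul_zero]
  -- coefficient conditions for B from h1
  have hB0 : B.coeff 0 = 0 := by
    have hA00 := congrArg (fun p => Polynomial.coeff p 0) h1
    simp only [mul_coeff_zero] at hA00
    simp only [hB_def, coeff_sub, mul_coeff_zero, coeff_dil, pow_zero, one_mul]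
    rw [hA00, sub_self]
  have hBtop : B.coeff (2 * n - 2) = 0 := by
    have h2n : 2 * n - 2 = (n - 1) + (n - 1) := by omega
    have hAtop := congrArg (fun p => Polynomial.coeff p ((n - 1) + (n - 1))) h1
    rw [coeff_mul_top (natDegree_pol_le x) (natDegree_pol_le (dg x)),
      coeff_mul_top (natDegree_pol_le y) (natDegree_pol_le (dg y))] at hAtop
    rw [hB_def, h2n, coeff_sub,
      coeff_mul_top (natDegree_pol_le x)
        ((natDegree_dil_le 2⁻¹ (pol (dg x))).trans (natDegree_pol_le (dg x))),
      coeff_mul_top (natDegree_pol_le y)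
        ((natDegree_dil_le 2⁻¹ (pol (dg y))).trans (natDegree_pol_le (dg y))),
      coeff_dil, coeff_dil]
    calc (pol x).coeff (n-1) * ((2:ℂ)⁻¹ ^ (n-1) * (pol (dg x)).coeff (n-1))
        - (pol y).coeff (n-1) * ((2:ℂ)⁻¹ ^ (n-1) * (pol (dg y)).coeff (n-1))
        = (2:ℂ)⁻¹ ^ (n-1) * ((pol x).coeff (n-1) * (pol (dg x)).coeff (n-1)
          - (pol y).coeff (n-1) * (pol (dg y)).coeff (n-1)) := by ring
    _ = 0 := by rw [hAtop, sub_self, mul_zero]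
  -- conclude B = 0
  set K : Polynomial ℂ := B.divX with hK_def
  have hBK : B = Polynomial.X * K := by
    conv_lhs => rw [← X_mul_divX_add B]
    rw [hB0, map_zero, add_zero]
  have hKdegLe : K.natDegree ≤ 2 * n - 3 := by
    rw [natDegree_le_iff_coeff_eq_zero]
    intro N hN
    rw [hK_def, coeff_divX]
    exact coeff_eq_zero_of_natDegree_lt (by omega)
  have hKtop : K.coeff (2 * n - 3) = 0 := by
    rw [hK_def, coeff_divX, show 2 * n - 3 + 1 = 2 * n - 2 by omega]
    exact hBtop
  have hKeval : ∀ j : Fin (2 * n - 3), K.eval (((Real.sqrt 2 : ℝ) : ℂ) * μP ^ (j : ℕ)) = 0 := by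
    intro j
    have hB' := hBeval j
    rw [hBK, eval_mul, eval_X] at hB'
    have hwj0 : ((Real.sqrt 2 : ℝ) : ℂ) * μP ^ (j : ℕ) ≠ 0 :=
      mul_ne_zero hsq2 (pow_ne_zero _ hμν)
    exact (mul_eq_zero.mp hB').resolve_left hwj0
  have hK0 : K = 0 := by
    have hKlt : K.natDegree < 2 * n - 3 := by
      rcases eq_or_ne K 0 with h | h
      · rw [h, natDegree_zero]; omega
      · refine lt_of_le_of_ne hKdegLe fun heq => ?_
        have : K.leadingCoeff = 0 := by rw [leadingCoeff, heq]; exact hKtop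
        exact h (leadingCoeff_eq_zero.mp this)
    apply Polynomial.eq_zero_of_natDegree_lt_card_of_eval_eq_zero K
      (f := fun j : Fin (2 * n - 3) => ((Real.sqrt 2 : ℝ) : ℂ) * μP ^ (j : ℕ))
    · intro i j h
      have := mul_left_cancel₀ hsq2 h
      exact Fin.ext (hμ.pow_inj i.isLt j.isLt this)
    · exact hKeval
    · rw [Fintype.card_fin]; exact hKlt
  have hB0' : B = 0 := by rw [hBK, hK0, mul_zero]
  have h2 : pol x * dil 2⁻¹ (pol (dg x)) = pol y * dil 2⁻¹ (pol (dg y)) := sub_eq_zero.mp hB0'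
  exact key hn x y h1 h2
end
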